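/- arXiv:1805.06925 — 5 statements merged into one kernel-verified Lean document; each statement's English description precedes it below -/
import Mathlib

section
/- Let μ > 0 and let f be twice continuously differentiable on [0,∞) with f'(0) = 0. Then the Poisson operator 𝒫^μ satisfies, for every x > 0, (𝒫^μ (f''))(x) = (𝒫^μ f)''(x) + (μ/x)·(𝒫^μ f)'(x), i.e. 𝒫^μ intertwines the second derivative D² and the Bessel operator B_μ: 𝒫^μ D² = B_μ 𝒫^μ. Moreover 𝒫^μ applied to the constant function 1 equals 1, i.e. C(μ)·x^{1−μ}·∫₀^x (x²−y²)^{μ/2−1} dy = 1 for every x > 0. -/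
open MeasureTheory Real

/-- The Bessel operator `B_μ u (y) = u''(y) + (μ/y) u'(y)`. -/
noncomputable def besselOp (μ : ℝ) (u : ℝ → ℝ) (y : ℝ) : ℝ :=
  deriv (deriv u) y + (μ / y) * deriv u y

/-- The constant `C(μ) = 2Γ((μ+1)/2)/(√π Γ(μ/2))` of the Poisson operator. -/
noncomputable def poissonC (μ : ℝ) : ℝ :=
  2 * Real.Gamma ((μ + 1) / 2) / (Real.sqrt Real.pi * Real.Gamma (μ / 2))

/-- The Poisson operator `𝒫^μ f (x) = C(μ) x^{1-μ} ∫₀^x f(y)(x²-y²)^{μ/2-1} dy`. -/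
noncomputable def poissonOp (μ : ℝ) (f : ℝ → ℝ) (x : ℝ) : ℝ :=
  poissonC μ * x ^ (1 - μ) * ∫ y in (0 : ℝ)..x, f y * (x ^ 2 - y ^ 2) ^ (μ / 2 - 1)

open Set intervalIntegral

section Aux

lemma wInt {p : ℝ} (hp : -1 < p) :
    IntervalIntegrable (fun t : ℝ => (1 - t^2) ^ p) volume 0 1 := by
  have h1 : IntervalIntegrable (fun t : ℝ => (1 - t) ^ p) volume 0 1 := by
    have := (intervalIntegrable_rpow' (a := 0) (b := 1) hp).comp_sub_left 1
    simpa using this.symm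
  have h2 : IntervalIntegrable (fun t : ℝ => (1 - t) ^ p * (1 + t) ^ p) volume 0 1 :=
    h1.mul_continuousOn (by
      apply ContinuousOn.rpow_const (by fun_prop)
      intro t ht
      rw [Set.uIcc_of_le (by norm_num)] at ht
      exact Or.inl (by nlinarith [ht.1]))
  rw [intervalIntegrable_iff] at h2 ⊢
  apply h2.congr_fun ?_ measurableSet_uIoc
  intro t ht
  rw [Set.uIoc_of_le (by norm_num)] at ht
  simp only
  rw [← Real.mul_rpow (by nlinarith [ht.2]) (by nlinarith [ht.1.le])]
  ring_nf

lemma betaInt {u v : ℝ} (hu : 0 < u) (hv : 0 < v) :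
    IntervalIntegrable (fun s : ℝ => s ^ (u-1) * (1 - s) ^ (v-1)) volume 0 1 := by
  have hL : IntervalIntegrable (fun s : ℝ => s ^ (u-1) * (1 - s) ^ (v-1)) volume 0 (1/2) := by
    apply (intervalIntegrable_rpow' (by linarith)).mul_continuousOn
    apply ContinuousOn.rpow_const (by fun_prop)
    intro t ht
    rw [Set.uIcc_of_le (by norm_num)] at ht
    exact Or.inl (by nlinarith [ht.2])
  have hR : IntervalIntegrable (fun s : ℝ => s ^ (u-1) * (1 - s) ^ (v-1)) volume (1/2) 1 := by
    have h1 : IntervalIntegrable (fun s : ℝ => (1 - s) ^ (v-1)) volume (1/2) 1 := by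
      have := (intervalIntegrable_rpow' (a := 0) (b := 1/2) (by linarith : (-1:ℝ) < v-1)).comp_sub_left 1
      norm_num at this
      exact this.symm
    apply h1.continuousOn_mul
    apply ContinuousOn.rpow_const (by fun_prop)
    intro t ht
    rw [Set.uIcc_of_le (by norm_num)] at ht
    exact Or.inl (by nlinarith [ht.1])
  exact hL.trans hR

lemma betaVal {u v : ℝ} (hu : 0 < u) (hv : 0 < v) :
    ∫ s in (0:ℝ)..1, s ^ (u-1) * (1 - s) ^ (v-1)
      = Real.Gamma u * Real.Gamma v / Real.Gamma (u+v) := by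
  have key := Complex.Gamma_mul_Gamma_eq_betaIntegral
    (s := (u:ℂ)) (t := (v:ℂ)) (by simpa using hu) (by simpa using hv)
  have hcast : Complex.betaIntegral (u:ℂ) (v:ℂ)
      = ((∫ s in (0:ℝ)..1, s ^ (u-1) * (1 - s) ^ (v-1) : ℝ) : ℂ) := by
    rw [Complex.betaIntegral, ← intervalIntegral.integral_ofReal]
    simp only [show ((u:ℂ)-1) = ((u-1:ℝ):ℂ) by push_cast; ring,
      show ((v:ℂ)-1) = ((v-1:ℝ):ℂ) by push_cast; ring]
    apply intervalIntegral.integral_congr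
    intro s hs
    rw [Set.uIcc_of_le (by norm_num)] at hs
    simp only
    rw [show ((1:ℂ) - (s:ℂ)) = ((1-s:ℝ):ℂ) by push_cast; ring,
       ← Complex.ofReal_cpow hs.1, ← Complex.ofReal_cpow (by linarith [hs.2])]
    push_cast
    ring
  rw [hcast] at key
  have h3 : ((Real.Gamma u * Real.Gamma v : ℝ) : ℂ)
      = ((Real.Gamma (u+v) * ∫ s in (0:ℝ)..1, s ^ (u-1) * (1 - s) ^ (v-1) : ℝ) : ℂ) := by
    rw [Complex.ofReal_mul, Complex.ofReal_mul, ← Complex.Gamma_ofReal u,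
      ← Complex.Gamma_ofReal v, ← Complex.Gamma_ofReal (u+v), Complex.ofReal_add]
    exact key
  have h4 := Complex.ofReal_injective h3
  have hG : Real.Gamma (u+v) ≠ 0 := (Real.Gamma_pos_of_pos (by linarith)).ne'
  field_simp
  linarith [h4]

lemma Kval {μ : ℝ} (hμ : 0 < μ) :
    ∫ t in (0:ℝ)..1, (1 - t^2) ^ (μ/2 - 1)
      = Real.sqrt Real.pi * Real.Gamma (μ/2) / (2 * Real.Gamma ((μ+1)/2)) := by
  set g : ℝ → ℝ := fun s => (1/2 : ℝ) * (s ^ ((1:ℝ)/2 - 1) * (1 - s) ^ (μ/2 - 1)) with hg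
  have hgint : IntervalIntegrable g volume 0 1 :=
    (betaInt (by norm_num) (by linarith)).const_mul _
  have himg1 : (fun t : ℝ => t^2) '' Ioo (min 0 1) (max 0 1) ⊆ Ioo 0 1 := by
    rw [show min (0:ℝ) 1 = 0 by norm_num, show max (0:ℝ) 1 = 1 by norm_num]
    rintro s ⟨t, ht, rfl⟩
    refine ⟨?_, ?_⟩ <;> simp only <;> nlinarith [ht.1, ht.2]
  have himg2 : (fun t : ℝ => t^2) '' uIcc 0 1 ⊆ Icc 0 1 := by
    rw [Set.uIcc_of_le (by norm_num)]
    rintro s ⟨t, ht, rfl⟩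
    refine ⟨?_, ?_⟩ <;> simp only <;> nlinarith [ht.1, ht.2]
  have key := integral_comp_smul_deriv''' (f := fun t : ℝ => t^2) (f' := fun t : ℝ => 2*t)
    (g := g) (a := 0) (b := 1)
    (by fun_prop)
    (fun x hx => by
      simpa using (hasDerivAt_pow 2 x).hasDerivWithinAt)
    (by
      apply ContinuousOn.mono ?_ himg1
      apply ContinuousOn.mul continuousOn_const
      apply ContinuousOn.mul
      · exact ContinuousOn.rpow_const (by fun_prop) (fun t ht => Or.inl ht.1.ne')
      · exact ContinuousOn.rpow_const (by fun_prop) (fun t ht => Or.inl (by linarith [ht.2])))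
    (by
      apply IntegrableOn.mono_set ?_ himg2
      have h5 := hgint
      rw [intervalIntegrable_iff, Set.uIoc_of_le (by norm_num)] at h5
      exact (integrableOn_Icc_iff_integrableOn_Ioc).mpr h5)
    (by
      have h1 := wInt (p := μ/2 - 1) (by linarith)
      rw [intervalIntegrable_iff, Set.uIoc_of_le (by norm_num)] at h1
      rw [Set.uIcc_of_le (by norm_num), integrableOn_Icc_iff_integrableOn_Ioc]
      apply h1.congr_fun ?_ measurableSet_Ioc
      intro t ht
      simp only [smul_eq_mul, Function.comp, hg]
      rw [show ((t:ℝ)^2) ^ ((1:ℝ)/2 - 1) = t⁻¹ by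
        rw [← Real.rpow_natCast t 2, ← Real.rpow_mul ht.1.le]
        norm_num
        exact (Real.rpow_neg_one t).trans (by simp)]
      have ht0 : t ≠ 0 := ht.1.ne'
      field_simp)
  have hlhs : (∫ t in (0:ℝ)..1, (fun t : ℝ => 2*t) t • (g ∘ fun t : ℝ => t^2) t)
      = ∫ t in (0:ℝ)..1, (1-t^2)^(μ/2-1) := by
    apply intervalIntegral.integral_congr_ae
    filter_upwards with t ht
    rw [Set.uIoc_of_le (by norm_num)] at ht
    simp only [smul_eq_mul, Function.comp, hg]
    rw [show ((t:ℝ)^2) ^ ((1:ℝ)/2 - 1) = t⁻¹ by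
      rw [← Real.rpow_natCast t 2, ← Real.rpow_mul ht.1.le]
      norm_num
      exact (Real.rpow_neg_one t).trans (by simp)]
    have ht0 : t ≠ 0 := ht.1.ne'
    field_simp
  rw [hlhs] at key
  rw [key]
  norm_num
  rw [intervalIntegral.integral_const_mul, betaVal (by norm_num) (by linarith),
    show (1:ℝ)/2 + μ/2 = (μ+1)/2 by ring, Real.Gamma_one_half_eq]
  ring

lemma poissonOp_eq (μ : ℝ) (g : ℝ → ℝ) {x : ℝ} (hx : 0 < x) :
    poissonOp μ g x = poissonC μ * ∫ t in (0:ℝ)..1, g (x*t) * (1 - t^2) ^ (μ/2 - 1) := by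
  have h := intervalIntegral.integral_comp_mul_right
    (f := fun y => g y * (x^2 - y^2)^(μ/2-1)) (a := 0) (b := 1) (c := x) hx.ne'
  rw [zero_mul, one_mul] at h
  have h2 : (∫ t in (0:ℝ)..1, g (t*x) * (x^2 - (t*x)^2)^(μ/2-1))
      = x^(μ-2) * ∫ t in (0:ℝ)..1, g (x*t) * (1 - t^2)^(μ/2-1) := by
    rw [← intervalIntegral.integral_const_mul]
    apply intervalIntegral.integral_congr
    intro t ht
    rw [Set.uIcc_of_le (by norm_num)] at ht
    simp only
    rw [show x^2 - (t*x)^2 = x^2 * (1 - t^2) by ring,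
      Real.mul_rpow (by positivity) (by nlinarith [ht.1, ht.2]),
      show (x:ℝ)^2 = x^((2:ℕ):ℝ) by rw [Real.rpow_natCast],
      ← Real.rpow_mul hx.le, mul_comm t x,
      show ((2:ℕ):ℝ) * (μ/2-1) = μ - 2 by push_cast; ring]
    ring
  rw [h2] at h
  have h3 : (∫ y in (0:ℝ)..x, g y * (x^2-y^2)^(μ/2-1))
      = x * (x^(μ-2) * ∫ t in (0:ℝ)..1, g (x*t) * (1 - t^2)^(μ/2-1)) := by
    rw [h, smul_eq_mul]
    field_simp
  have hxx : x^(1-μ) * (x * x^(μ-2)) = 1 := by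
    rw [show (x * x^(μ-2)) = x^(μ-1) by
        nth_rewrite 1 [← Real.rpow_one x]
        rw [← Real.rpow_add hx, show 1+(μ-2) = μ-1 by ring],
      ← Real.rpow_add hx]
    norm_num
  unfold poissonOp
  calc poissonC μ * x^(1-μ) * ∫ y in (0:ℝ)..x, g y * (x^2-y^2)^(μ/2-1)
      = poissonC μ * (x^(1-μ) * (x * x^(μ-2)))
        * ∫ t in (0:ℝ)..1, g (x*t) * (1 - t^2)^(μ/2-1) := by rw [h3]; ring
    _ = poissonC μ * ∫ t in (0:ℝ)..1, g (x*t) * (1 - t^2)^(μ/2-1) := by rw [hxx]; ring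

set_option maxHeartbeats 1000000 in
lemma derivJ {μ : ℝ} (hμ : 0 < μ) (c φ ψ : ℝ → ℝ) (hc : Continuous c)
    (hφψ : ∀ y, 0 < y → HasDerivAt φ (ψ y) y)
    (hφc : ContinuousOn φ (Ici 0)) (hψc : ContinuousOn ψ (Ici 0))
    {x₀ : ℝ} (hx₀ : 0 < x₀) :
    HasDerivAt (fun x => ∫ t in (0:ℝ)..1, (c t * φ (x*t)) * (1 - t^2) ^ (μ/2 - 1))
      (∫ t in (0:ℝ)..1, (c t * (t * ψ (x₀*t))) * (1 - t^2) ^ (μ/2 - 1)) x₀ := by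
  have hp : (-1:ℝ) < μ/2 - 1 := by linarith
  have hwm : AEStronglyMeasurable (fun t : ℝ => (1 - t^2) ^ (μ/2 - 1))
      (volume.restrict (Set.uIoc (0:ℝ) 1)) := by
    apply Measurable.aestronglyMeasurable; fun_prop
  have hIoc : Set.uIoc (0:ℝ) 1 = Ioc 0 1 := Set.uIoc_of_le (by norm_num)
  have huIcc : uIcc (0:ℝ) 1 = Icc 0 1 := Set.uIcc_of_le (by norm_num)
  -- bounds
  obtain ⟨Mc, hMc⟩ := (isCompact_Icc (a := (0:ℝ)) (b := 1)).exists_bound_of_continuousOn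
    hc.continuousOn
  obtain ⟨Mψ, hMψ⟩ := (isCompact_Icc (a := (0:ℝ)) (b := 2*x₀)).exists_bound_of_continuousOn
    (hψc.mono (Icc_subset_Ici_self))
  have hmem : ∀ x ∈ Metric.ball x₀ (x₀/2), ∀ t ∈ Ioc (0:ℝ) 1, 0 < x ∧ x*t ∈ Icc 0 (2*x₀) := by
    intro x hx t ht
    rw [Metric.mem_ball, Real.dist_eq, abs_lt] at hx
    have hx1 : 0 < x := by linarith
    refine ⟨hx1, ⟨by nlinarith [ht.1], ?_⟩⟩
    nlinarith [ht.1, ht.2]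
  have hcontφ : ∀ x : ℝ, 0 < x → ContinuousOn (fun t => c t * φ (x*t)) (Icc 0 1) := by
    intro x hx
    exact hc.continuousOn.mul (hφc.comp (by fun_prop) (fun t ht => by
      simp only [Set.mem_Ici]; nlinarith [ht.1]))
  have hcontψ : ∀ x : ℝ, 0 < x → ContinuousOn (fun t => c t * (t * ψ (x*t))) (Icc 0 1) := by
    intro x hx
    exact hc.continuousOn.mul (continuousOn_id.mul (hψc.comp (by fun_prop) (fun t ht => by
      simp only [Set.mem_Ici]; nlinarith [ht.1])))
  have hmeas : ∀ x : ℝ, 0 < x → AEStronglyMeasurable (fun t => (c t * φ (x*t)) * (1 - t^2) ^ (μ/2 - 1))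
      (volume.restrict (Set.uIoc (0:ℝ) 1)) := by
    intro x hx
    refine AEStronglyMeasurable.mul ?_ hwm
    rw [hIoc]
    exact ((hcontφ x hx).mono Ioc_subset_Icc_self).aestronglyMeasurable measurableSet_Ioc
  have hmeas' : AEStronglyMeasurable (fun t => (c t * (t * ψ (x₀*t))) * (1 - t^2) ^ (μ/2 - 1))
      (volume.restrict (Set.uIoc (0:ℝ) 1)) := by
    refine AEStronglyMeasurable.mul ?_ hwm
    rw [hIoc]
    exact ((hcontψ x₀ hx₀).mono Ioc_subset_Icc_self).aestronglyMeasurable measurableSet_Ioc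
  have hint : IntervalIntegrable (fun t => (c t * φ (x₀*t)) * (1 - t^2) ^ (μ/2 - 1)) volume 0 1 := by
    refine (wInt hp).continuousOn_mul ?_
    rw [huIcc]
    exact hcontφ x₀ hx₀
  have key := intervalIntegral.hasDerivAt_integral_of_dominated_loc_of_deriv_le
    (F := fun x t => (c t * φ (x*t)) * (1 - t^2) ^ (μ/2 - 1))
    (F' := fun x t => (c t * (t * ψ (x*t))) * (1 - t^2) ^ (μ/2 - 1))
    (x₀ := x₀) (s := Metric.ball x₀ (x₀/2)) (a := 0) (b := 1)
    (bound := fun t => (|Mc| * |Mψ|) * |(1 - t^2) ^ (μ/2 - 1)|)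
    (Metric.ball_mem_nhds x₀ (by positivity))
    (by
      filter_upwards [Metric.ball_mem_nhds x₀ (by positivity : (0:ℝ) < x₀/2)] with x hx
      exact hmeas x (hmem x hx 1 (by norm_num)).1)
    hint
    hmeas'
    (by
      filter_upwards with t ht x hx
      rw [hIoc] at ht
      obtain ⟨hx1, hxt⟩ := hmem x hx t ht
      have h1 : ‖c t‖ ≤ |Mc| := le_trans (hMc t ⟨ht.1.le, ht.2⟩) (le_abs_self _)
      have h2 : ‖ψ (x*t)‖ ≤ |Mψ| := le_trans (hMψ _ hxt) (le_abs_self _)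
      rw [Real.norm_eq_abs, abs_mul, abs_mul, abs_mul]
      have h3 : |t| ≤ 1 := by rw [abs_of_pos ht.1]; exact ht.2
      rw [Real.norm_eq_abs] at h1 h2
      calc |c t| * (|t| * |ψ (x*t)|) * |(1 - t^2) ^ (μ/2 - 1)|
          ≤ |Mc| * (1 * |Mψ|) * |(1 - t^2) ^ (μ/2 - 1)| :=
            mul_le_mul_of_nonneg_right
              (mul_le_mul h1 (mul_le_mul h3 h2 (abs_nonneg _) zero_le_one)
                (by positivity) (abs_nonneg _)) (abs_nonneg _)
        _ = (|Mc| * |Mψ|) * |(1 - t^2) ^ (μ/2 - 1)| := by ring)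
    (((wInt hp).abs).const_mul _)
    (by
      filter_upwards with t ht x hx
      rw [hIoc] at ht
      obtain ⟨hx1, _⟩ := hmem x hx t ht
      have hxt : 0 < x*t := by nlinarith [ht.1]
      have hd : HasDerivAt (fun x => φ (x*t)) (ψ (x*t) * t) x :=
        (hφψ _ hxt).comp x (hasDerivAt_mul_const t)
      have := ((hd.const_mul (c t)).mul_const ((1 - t^2) ^ (μ/2 - 1)))
      exact this.congr_deriv (by ring))
  exact key.2

set_option maxHeartbeats 1000000 in
lemma ibp {μ : ℝ} (hμ : 0 < μ) (G G2 : ℝ → ℝ)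
    (hGd : ∀ y, 0 < y → HasDerivAt G (G2 y) y)
    (hGc : ContinuousOn G (Ici 0)) (hG2c : ContinuousOn G2 (Ici 0))
    (hG0 : G 0 = 0) {x : ℝ} (hx : 0 < x) :
    ∫ t in (0:ℝ)..1, G2 (x*t) * (1 - t^2) ^ (μ/2 - 1)
      = (∫ t in (0:ℝ)..1, (t * (t * G2 (x*t))) * (1 - t^2) ^ (μ/2 - 1))
        + (μ/x) * ∫ t in (0:ℝ)..1, (t * G (x*t)) * (1 - t^2) ^ (μ/2 - 1) := by
  have hp : (-1:ℝ) < μ/2 - 1 := by linarith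
  have huIcc : uIcc (0:ℝ) 1 = Icc 0 1 := Set.uIcc_of_le (by norm_num)
  have hmapsTo : ∀ t ∈ Icc (0:ℝ) 1, x * t ∈ Ici (0:ℝ) := by
    intro t ht; simp only [Set.mem_Ici]; nlinarith [ht.1]
  have hcG : ContinuousOn (fun t => G (x*t)) (Icc 0 1) := hGc.comp (by fun_prop) hmapsTo
  have hcG2 : ContinuousOn (fun t => G2 (x*t)) (Icc 0 1) := hG2c.comp (by fun_prop) hmapsTo
  have hcpow : ContinuousOn (fun t : ℝ => (1 - t^2) ^ (μ/2)) (Icc 0 1) :=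
    ContinuousOn.rpow_const (by fun_prop) (fun t _ => Or.inr (by positivity))
  -- the auxiliary function H and its derivative H'
  set H : ℝ → ℝ := fun t => G (x*t) * (1 - t^2) ^ (μ/2) with hH
  set H' : ℝ → ℝ := fun t =>
    (x * G2 (x*t)) * (1 - t^2) ^ (μ/2)
      + G (x*t) * (μ/2 * (1 - t^2) ^ (μ/2 - 1) * (-(2*t))) with hH'
  have hHc : ContinuousOn H (Icc 0 1) := hcG.mul hcpow
  have hHd : ∀ t ∈ Ioo (0:ℝ) 1, HasDerivAt H (H' t) t := by
    intro t ht
    have hxt : 0 < x * t := by nlinarith [ht.1]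
    have part1 : HasDerivAt (fun t => G (x*t)) (G2 (x*t) * x) t := by
      have hl : HasDerivAt (fun t : ℝ => x * t) x t := by
        simpa using (hasDerivAt_id t).const_mul x
      exact (hGd _ hxt).comp t hl
    have hb : HasDerivAt (fun t : ℝ => 1 - t^2) (-(2*t)) t := by
      simpa using ((hasDerivAt_pow 2 t).const_sub 1)
    have part2 := hb.rpow_const (p := μ/2)
      (Or.inl (ne_of_gt (by nlinarith [ht.1, ht.2] : (0:ℝ) < 1 - t^2)))
    have := part1.mul part2
    refine this.congr_deriv ?_
    simp only [hH']
    ring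
  have hint1 : IntervalIntegrable (fun t => (x * G2 (x*t)) * (1 - t^2) ^ (μ/2)) volume 0 1 := by
    apply ContinuousOn.intervalIntegrable
    rw [huIcc]
    exact (continuousOn_const.mul hcG2).mul hcpow
  have hint2 : IntervalIntegrable
      (fun t => G (x*t) * (μ/2 * (1 - t^2) ^ (μ/2 - 1) * (-(2*t)))) volume 0 1 := by
    have heq : (fun t => G (x*t) * (μ/2 * (1 - t^2) ^ (μ/2 - 1) * (-(2*t))))
        = fun t => (G (x*t) * (μ/2 * (-(2*t)))) * (1 - t^2) ^ (μ/2 - 1) := by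
      funext t; ring
    rw [heq]
    refine IntervalIntegrable.continuousOn_mul (wInt hp) ?_
    rw [huIcc]
    exact hcG.mul (continuousOn_const.mul (by fun_prop))
  have hH'int : IntervalIntegrable H' volume 0 1 := hint1.add hint2
  have hIBP := intervalIntegral.integral_eq_sub_of_hasDeriv_right_of_le (by norm_num) hHc
    (fun t ht => (hHd t ht).hasDerivWithinAt) hH'int
  have hH1 : H 1 = 0 := by
    simp only [hH]
    norm_num
    exact Or.inr (Real.zero_rpow (by positivity))
  have hH0 : H 0 = 0 := by
    simp only [hH]
    norm_num [hG0]
  rw [hH1, hH0, sub_zero] at hIBP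
  -- split the integral
  rw [hH'] at hIBP
  rw [intervalIntegral.integral_add hint1 hint2] at hIBP
  -- second piece equals -μ * J₁
  have e2 : (∫ t in (0:ℝ)..1, G (x*t) * (μ/2 * (1 - t^2) ^ (μ/2 - 1) * (-(2*t))))
      = -μ * ∫ t in (0:ℝ)..1, (t * G (x*t)) * (1 - t^2) ^ (μ/2 - 1) := by
    rw [← intervalIntegral.integral_const_mul]
    apply intervalIntegral.integral_congr
    intro t _
    simp only
    ring
  -- first piece: x * (I2 - J2)
  have hwI2 : IntervalIntegrable (fun t => G2 (x*t) * (1 - t^2) ^ (μ/2 - 1)) volume 0 1 :=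
    (wInt hp).continuousOn_mul (by rw [huIcc]; exact hcG2)
  have hwJ2 : IntervalIntegrable (fun t => (t * (t * G2 (x*t))) * (1 - t^2) ^ (μ/2 - 1))
      volume 0 1 :=
    (wInt hp).continuousOn_mul (by
      rw [huIcc]
      exact continuousOn_id.mul (continuousOn_id.mul hcG2))
  have e1 : (∫ t in (0:ℝ)..1, (x * G2 (x*t)) * (1 - t^2) ^ (μ/2))
      = x * ((∫ t in (0:ℝ)..1, G2 (x*t) * (1 - t^2) ^ (μ/2 - 1))
        - ∫ t in (0:ℝ)..1, (t * (t * G2 (x*t))) * (1 - t^2) ^ (μ/2 - 1)) := by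
    rw [← intervalIntegral.integral_sub hwI2 hwJ2, ← intervalIntegral.integral_const_mul]
    apply intervalIntegral.integral_congr_ae
    filter_upwards with t ht
    rw [Set.uIoc_of_le (by norm_num)] at ht
    have hb : (0:ℝ) ≤ 1 - t^2 := by nlinarith [ht.1, ht.2]
    rcases eq_or_lt_of_le hb with hb0 | hb0
    · rw [show (1:ℝ) - t^2 = 0 by linarith, Real.zero_rpow (by positivity : μ/2 ≠ 0)]
      have ht1 : t = 1 := by nlinarith [ht.1, ht.2]
      rw [ht1]
      ring
    · have : (1 - t^2) ^ (μ/2) = (1 - t^2) * (1 - t^2) ^ (μ/2 - 1) := by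
        nth_rewrite 2 [show (1:ℝ) - t^2 = (1-t^2) ^ (1:ℝ) by rw [Real.rpow_one]]
        rw [← Real.rpow_add hb0]
        norm_num
      rw [this]
      ring
  rw [e1, e2] at hIBP
  -- now hIBP : x * (I2 - J2) + (-μ * J₁) = 0
  have hxne : x ≠ 0 := hx.ne'
  have h6 : (∫ t in (0:ℝ)..1, G2 (x*t) * (1 - t^2) ^ (μ/2 - 1))
      - (∫ t in (0:ℝ)..1, (t * (t * G2 (x*t))) * (1 - t^2) ^ (μ/2 - 1))
      = μ/x * ∫ t in (0:ℝ)..1, (t * G (x*t)) * (1 - t^2) ^ (μ/2 - 1) := by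
    rw [div_mul_eq_mul_div, eq_div_iff hxne]
    linear_combination hIBP
  linarith [h6]

end Aux

/-- the Poisson operator intertwines `D²` and the Bessel operator `B_μ`,
i.e. `𝒫^μ D² = B_μ 𝒫^μ`, and `𝒫^μ 1 = 1`. -/
theorem poisson_transmutation (μ : ℝ) (hμ : 0 < μ) (f : ℝ → ℝ)
    (hf : ContDiffOn ℝ 2 f (Set.Ici (0 : ℝ)))
    (hf'0 : derivWithin f (Set.Ici (0 : ℝ)) 0 = 0) :
    ∀ x : ℝ, 0 < x →
      poissonOp μ (fun y => deriv (deriv f) y) x = besselOp μ (poissonOp μ f) x ∧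
      poissonC μ * x ^ (1 - μ) * (∫ y in (0 : ℝ)..x, (x ^ 2 - y ^ 2) ^ (μ / 2 - 1)) = 1 := by
  intro x hx
  set G : ℝ → ℝ := derivWithin f (Set.Ici 0) with hG
  set G2 : ℝ → ℝ := derivWithin G (Set.Ici 0) with hG2
  have hG1 : ContDiffOn ℝ 1 G (Set.Ici 0) :=
    hf.derivWithin (uniqueDiffOn_Ici 0) (by norm_num)
  have hGc : ContinuousOn G (Set.Ici 0) := hG1.continuousOn
  have hG2c : ContinuousOn G2 (Set.Ici 0) :=
    (hG1.derivWithin (uniqueDiffOn_Ici 0) (le_refl 1) :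
      ContDiffOn ℝ 0 G2 (Set.Ici 0)).continuousOn
  have hfc : ContinuousOn f (Set.Ici 0) := hf.continuousOn
  have hfd : ∀ y, 0 < y → HasDerivAt f (G y) y := by
    intro y hy
    have h1 : DifferentiableWithinAt ℝ f (Set.Ici 0) y :=
      (hf.differentiableOn (by norm_num)) y (le_of_lt hy)
    have h2 := (h1.differentiableAt (Ici_mem_nhds hy)).hasDerivAt
    rwa [hG, derivWithin_of_mem_nhds (Ici_mem_nhds hy)]
  have hGd : ∀ y, 0 < y → HasDerivAt G (G2 y) y := by
    intro y hy
    have h1 : DifferentiableWithinAt ℝ G (Set.Ici 0) y :=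
      (hG1.differentiableOn (by norm_num)) y (le_of_lt hy)
    have h2 := (h1.differentiableAt (Ici_mem_nhds hy)).hasDerivAt
    rwa [hG2, derivWithin_of_mem_nhds (Ici_mem_nhds hy)]
  have hDDf : ∀ y, 0 < y → deriv (deriv f) y = G2 y := by
    intro y hy
    have hev : deriv f =ᶠ[nhds y] G := by
      filter_upwards [isOpen_Ioi.mem_nhds hy] with z hz
      exact (hfd z hz).deriv
    rw [hev.deriv_eq]
    exact (hGd y hy).deriv
  constructor
  · -- the transmutation identity
    -- first derivative of the Poisson integral
    have hJd : ∀ z, 0 < z → HasDerivAt (fun x' => ∫ t in (0:ℝ)..1, f (x'*t) * (1 - t^2) ^ (μ/2 - 1))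
        (∫ t in (0:ℝ)..1, (t * G (z*t)) * (1 - t^2) ^ (μ/2 - 1)) z := by
      intro z hz
      have h := derivJ hμ (fun _ => 1) f G continuous_const hfd hfc hGc hz
      simpa only [one_mul] using h
    have hJ1d : ∀ z, 0 < z → HasDerivAt
        (fun x' => ∫ t in (0:ℝ)..1, (t * G (x'*t)) * (1 - t^2) ^ (μ/2 - 1))
        (∫ t in (0:ℝ)..1, (t * (t * G2 (z*t))) * (1 - t^2) ^ (μ/2 - 1)) z := by
      intro z hz
      have h := derivJ hμ (fun t => t) G G2 continuous_id hGd hGc hG2c hz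
      simpa only using h
    have hDP : ∀ z ∈ Set.Ioi (0:ℝ), deriv (poissonOp μ f) z
        = poissonC μ * ∫ t in (0:ℝ)..1, (t * G (z*t)) * (1 - t^2) ^ (μ/2 - 1) := by
      intro z hz
      have hev : poissonOp μ f =ᶠ[nhds z]
          fun x' => poissonC μ * ∫ t in (0:ℝ)..1, f (x'*t) * (1 - t^2) ^ (μ/2 - 1) := by
        filter_upwards [isOpen_Ioi.mem_nhds hz] with y hy
        exact poissonOp_eq μ f hy
      rw [hev.deriv_eq]
      exact (((hJd z hz).const_mul (poissonC μ))).deriv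
    have hDDP : deriv (deriv (poissonOp μ f)) x
        = poissonC μ * ∫ t in (0:ℝ)..1, (t * (t * G2 (x*t))) * (1 - t^2) ^ (μ/2 - 1) := by
      have hev : deriv (poissonOp μ f) =ᶠ[nhds x]
          fun z => poissonC μ * ∫ t in (0:ℝ)..1, (t * G (z*t)) * (1 - t^2) ^ (μ/2 - 1) := by
        filter_upwards [isOpen_Ioi.mem_nhds hx] with z hz
        exact hDP z hz
      rw [hev.deriv_eq]
      exact (((hJ1d x hx).const_mul (poissonC μ))).deriv
    have hLHS : poissonOp μ (fun y => deriv (deriv f) y) x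
        = poissonC μ * ∫ t in (0:ℝ)..1, G2 (x*t) * (1 - t^2) ^ (μ/2 - 1) := by
      rw [poissonOp_eq μ _ hx]
      congr 1
      apply intervalIntegral.integral_congr_ae
      filter_upwards with t ht
      rw [Set.uIoc_of_le (by norm_num)] at ht
      rw [hDDf (x*t) (by nlinarith [ht.1])]
    have hibp := ibp hμ G G2 hGd hGc hG2c hf'0 hx
    rw [hLHS, hibp]
    unfold besselOp
    rw [hDDP, hDP x hx]
    ring
  · -- 𝒫^μ 1 = 1
    have h2 := poissonOp_eq μ (fun _ => 1) hx
    unfold poissonOp at h2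
    simp only [one_mul] at h2
    rw [h2, Kval hμ]
    unfold poissonC
    have g1 : 0 < Real.Gamma ((μ+1)/2) := Real.Gamma_pos_of_pos (by linarith)
    have g2 : 0 < Real.Gamma (μ/2) := Real.Gamma_pos_of_pos (by linarith)
    have g3 : 0 < Real.sqrt Real.pi := Real.sqrt_pos.mpr Real.pi_pos
    field_simp
end

section
/- Let μ ∈ ℝ and let u : ℝ × (0,∞) → ℝ be twice continuously differentiable and satisfy u_xx(x,t) = u_tt(x,t) + ((2−μ)/t)·u_t(x,t) for all x ∈ ℝ, t > 0. Then the function v(x,t) := t^{1−μ}·u(x,t) satisfies v_xx(x,t) = v_tt(x,t) + (μ/t)·v_t(x,t) for all x ∈ ℝ, t > 0. Equivalently: if u(x,t;μ) is a solution of u_xx = (B_μ)_t u, then t^{1−μ}·u(x,t;2−μ) is also a solution of u_xx = (B_μ)_t u. -/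
open MeasureTheory Real

/-- if `u` solves `u_xx = u_tt + ((2-μ)/t) u_t` (i.e. `u_xx = (B_{2-μ})_t u`),
then `v(x,t) = t^{1-μ} u(x,t)` solves `v_xx = v_tt + (μ/t) v_t` (i.e. `v_xx = (B_μ)_t v`). -/
theorem epd_parameter_reflection (μ : ℝ) (u : ℝ → ℝ → ℝ)
    (hu : ContDiffOn ℝ 2 (fun p : ℝ × ℝ => u p.1 p.2) (Set.univ ×ˢ Set.Ioi (0 : ℝ)))
    (heq : ∀ x t : ℝ, 0 < t →
      deriv (deriv (fun x' => u x' t)) x =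
        deriv (deriv (u x)) t + ((2 - μ) / t) * deriv (u x) t) :
    ∀ x t : ℝ, 0 < t →
      deriv (deriv (fun x' => t ^ (1 - μ) * u x' t)) x =
        deriv (deriv (fun t' => t' ^ (1 - μ) * u x t')) t +
          (μ / t) * deriv (fun t' => t' ^ (1 - μ) * u x t') t := by
  intro x t ht
  have htne : t ≠ 0 := ne_of_gt ht
  -- f = u x is C² on Ioi 0
  have hf2 : ContDiffOn ℝ 2 (u x) (Set.Ioi 0) := by
    have hc : ContDiffOn ℝ 2 (fun t' : ℝ => ((x, t') : ℝ × ℝ)) (Set.Ioi 0) :=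
      (contDiff_const.prodMk contDiff_id).contDiffOn
    have := hu.comp hc (fun t' ht' => ⟨trivial, ht'⟩)
    exact this
  have hfd : ∀ s ∈ Set.Ioi (0:ℝ), DifferentiableAt ℝ (u x) s := fun s hs =>
    (hf2.differentiableOn (by norm_num) s hs).differentiableAt (isOpen_Ioi.mem_nhds hs)
  have hdf1 : ContDiffOn ℝ 1 (deriv (u x)) (Set.Ioi 0) :=
    hf2.deriv_of_isOpen isOpen_Ioi (by norm_num)
  have hdfd : DifferentiableAt ℝ (deriv (u x)) t :=
    (hdf1.differentiableOn (by norm_num) t ht).differentiableAt (isOpen_Ioi.mem_nhds ht)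
  -- LHS : x-derivatives
  have hL : deriv (deriv (fun x' => t ^ (1 - μ) * u x' t)) x
      = t ^ (1 - μ) * deriv (deriv (fun x' => u x' t)) x := by
    rw [deriv_const_mul_field', deriv_const_mul_field]
  -- derivative of v(t') = t'^(1-μ) * u x t' near t
  have hv' : (fun t' => deriv (fun s => s ^ (1 - μ) * u x s) t')
      =ᶠ[nhds t] fun t' => (1 - μ) * t' ^ (-μ) * u x t' + t' ^ (1 - μ) * deriv (u x) t' := by
    filter_upwards [isOpen_Ioi.mem_nhds ht] with s hs
    have hs0 : (s:ℝ) ≠ 0 := ne_of_gt hs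
    have h1 : HasDerivAt (fun y : ℝ => y ^ (1 - μ)) ((1 - μ) * s ^ (1 - μ - 1)) s :=
      Real.hasDerivAt_rpow_const (Or.inl hs0)
    have h2 : HasDerivAt (u x) (deriv (u x) s) s := (hfd s hs).hasDerivAt
    have : deriv (fun s => s ^ (1 - μ) * u x s) s = _ := (h1.mul h2).deriv
    rw [this]
    rw [show (1:ℝ) - μ - 1 = -μ by ring]
  have hdv : deriv (fun t' => t' ^ (1 - μ) * u x t') t
      = (1 - μ) * t ^ (-μ) * u x t + t ^ (1 - μ) * deriv (u x) t := hv'.self_of_nhds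
  -- second derivative
  have hddv : deriv (deriv (fun t' => t' ^ (1 - μ) * u x t')) t
      = ((1 - μ) * (-μ) * t ^ (-μ - 1)) * u x t + (1 - μ) * t ^ (-μ) * deriv (u x) t
        + ((1 - μ) * t ^ (-μ) * deriv (u x) t + t ^ (1 - μ) * deriv (deriv (u x)) t) := by
    rw [hv'.deriv_eq]
    have h1 : HasDerivAt (fun y : ℝ => (1 - μ) * y ^ (-μ)) ((1 - μ) * (-μ * t ^ (-μ - 1))) t :=
      (Real.hasDerivAt_rpow_const (Or.inl htne)).const_mul (1 - μ)
    have h2 : HasDerivAt (u x) (deriv (u x) t) t := (hfd t ht).hasDerivAt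
    have h3 : HasDerivAt (fun y : ℝ => y ^ (1 - μ)) ((1 - μ) * t ^ (1 - μ - 1)) t :=
      Real.hasDerivAt_rpow_const (Or.inl htne)
    have h4 : HasDerivAt (deriv (u x)) (deriv (deriv (u x)) t) t := hdfd.hasDerivAt
    have : deriv (fun t' => (1 - μ) * t' ^ (-μ) * u x t' + t' ^ (1 - μ) * deriv (u x) t') t = _ :=
      ((h1.mul h2).add (h3.mul h4)).deriv
    rw [this]
    rw [show (1:ℝ) - μ - 1 = -μ by ring]
    ring
  -- put everything together
  rw [hL, heq x t ht, hdv, hddv]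
  have e1 : t ^ (1 - μ) = t ^ (-μ) * t := by
    rw [← Real.rpow_add_one htne (-μ)]; ring_nf
  have e2 : t ^ (-μ - 1) = t ^ (-μ) / t := by
    rw [Real.rpow_sub ht, Real.rpow_one]
  rw [e1, e2]
  field_simp
  ring
end

section
/- Let μ > 0 and let u : ℝ × [0,∞) → ℝ be continuously differentiable with u(x,0) = f(x) and u_t(x,0) = 0 for all x. Then applying the Poisson operator in the t-variable preserves these initial data: for every x, lim_{t→0+} (𝒫^μ_t u)(x,t) = f(x) and lim_{t→0+} ∂/∂t (𝒫^μ_t u)(x,t) = 0, where (𝒫^μ_t u)(x,t) = C(μ)·t^{1−μ}·∫₀^t u(x,y)·(t²−y²)^{μ/2−1} dy. -/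
open MeasureTheory Real Filter

open intervalIntegral in
private lemma K_integrable {μ : ℝ} (hμ : 0 < μ) :
    IntervalIntegrable (fun s : ℝ => (1 - s ^ 2) ^ (μ / 2 - 1)) volume 0 1 := by
  set r := μ / 2 - 1 with hrdef
  have hr' : (-1 : ℝ) < r := by simp only [hrdef]; linarith
  have h1 : IntervalIntegrable (fun s : ℝ => (1 - s) ^ r) volume 0 1 := by
    have := (intervalIntegral.intervalIntegrable_rpow' (a := 0) (b := 1) hr').comp_sub_left 1
    simpa using this.symm
  set c := max ((2:ℝ) ^ r) 1 with hcdef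
  have hm : Measurable fun s : ℝ => (1 - s ^ 2) ^ r := by fun_prop
  refine (h1.const_mul c).mono_fun hm.aestronglyMeasurable ?_
  rw [Set.uIoc_of_le (zero_le_one' ℝ)]
  filter_upwards [ae_restrict_mem measurableSet_Ioc] with s hs
  have h1s : (0:ℝ) ≤ 1 - s := by linarith [hs.2]
  have h2s : (0:ℝ) ≤ 1 + s := by linarith [hs.1.le]
  have key : (1 - s ^ 2 : ℝ) ^ r = (1 - s) ^ r * (1 + s) ^ r := by
    rw [← Real.mul_rpow h1s h2s]; ring_nf
  have hle : (1 + s : ℝ) ^ r ≤ c := by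
    rcases le_or_gt 0 r with h | h
    · exact le_trans (Real.rpow_le_rpow h2s (by linarith [hs.2]) h) (le_max_left _ _)
    · exact le_trans (Real.rpow_le_one_of_one_le_of_nonpos (by linarith [hs.1.le]) h.le)
        (le_max_right _ _)
  have hnn : (0:ℝ) ≤ (1 - s ^ 2) ^ r := Real.rpow_nonneg (by nlinarith [hs.1.le, hs.2]) r
  have : (1 - s ^ 2 : ℝ) ^ r ≤ c * (1 - s) ^ r := by
    rw [key, mul_comm c]
    exact mul_le_mul_of_nonneg_left hle (Real.rpow_nonneg h1s r)
  calc ‖(1 - s ^ 2 : ℝ) ^ r‖ = (1 - s ^ 2 : ℝ) ^ r := Real.norm_of_nonneg hnn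
    _ ≤ c * (1 - s) ^ r := this
    _ ≤ ‖c * (1 - s) ^ r‖ := le_abs_self _

open intervalIntegral in
private lemma K_value {μ : ℝ} (hμ : 0 < μ) :
    ∫ s in (0:ℝ)..1, (1 - s ^ 2) ^ (μ / 2 - 1)
      = Real.sqrt Real.pi * Real.Gamma (μ / 2) / (2 * Real.Gamma ((μ + 1) / 2)) := by
  have hμ2 : (0:ℝ) < μ / 2 := half_pos hμ
  set J : ℝ := ∫ x in (0:ℝ)..1, x ^ (-(1/2) : ℝ) * (1 - x) ^ (μ/2 - 1) with hJ
  have hint : ∀ x : ℝ, 0 ≤ x → x ≤ 1 →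
      ((x ^ (-(1/2):ℝ) * (1-x) ^ (μ/2-1) : ℝ) : ℂ)
        = (x:ℂ) ^ ((1/2:ℂ) - 1) * ((1:ℂ) - x) ^ (((μ/2 : ℝ):ℂ) - 1) := by
    intro x hx0 hx1
    rw [Complex.ofReal_mul, Complex.ofReal_cpow hx0, Complex.ofReal_cpow (by linarith)]
    push_cast
    norm_num
  have hbeta : Complex.betaIntegral (1/2) ((μ/2 : ℝ) : ℂ) = (J : ℂ) := by
    rw [Complex.betaIntegral, hJ, ← intervalIntegral.integral_ofReal]
    refine intervalIntegral.integral_congr fun x hx => ?_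
    rw [Set.uIcc_of_le zero_le_one] at hx
    exact (hint x hx.1 hx.2).symm
  have hG : Real.Gamma (1/2) * Real.Gamma (μ/2) = Real.Gamma ((μ+1)/2) * J := by
    have h := Complex.Gamma_mul_Gamma_eq_betaIntegral
      (s := (1/2 : ℂ)) (t := ((μ/2 : ℝ) : ℂ)) (by norm_num) (by simpa using hμ2)
    rw [hbeta] at h
    have h2 : (1/2 : ℂ) + ((μ/2:ℝ):ℂ) = (((μ+1)/2 : ℝ) : ℂ) := by push_cast; ring
    rw [h2, Complex.Gamma_ofReal, Complex.Gamma_ofReal,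
      show (1/2:ℂ) = ((1/2:ℝ):ℂ) by norm_num, Complex.Gamma_ofReal] at h
    exact_mod_cast h
  -- integrability of the beta integrand
  have hgint : IntegrableOn (fun x : ℝ => x ^ (-(1/2):ℝ) * (1-x) ^ (μ/2-1)) (Set.Icc 0 1) := by
    have hc := Complex.betaIntegral_convergent (u := 1/2) (v := ((μ/2:ℝ):ℂ)) (by norm_num)
      (by simpa using hμ2)
    rw [intervalIntegrable_iff, Set.uIoc_of_le zero_le_one] at hc
    rw [integrableOn_Icc_iff_integrableOn_Ioc]
    refine MeasureTheory.IntegrableOn.congr_fun hc.re (fun x hx => ?_) measurableSet_Ioc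
    rw [← hint x hx.1.le hx.2]; simp
  -- substitution x = s^2
  set g : ℝ → ℝ := fun x : ℝ => x ^ (-(1/2):ℝ) * (1-x) ^ (μ/2-1) with hgdef
  have himg : (fun s : ℝ => s ^ 2) '' Set.uIcc 0 1 ⊆ Set.Icc 0 1 := by
    rintro _ ⟨s, hs, rfl⟩
    rw [Set.uIcc_of_le zero_le_one] at hs
    refine ⟨sq_nonneg s, ?_⟩
    show s ^ 2 ≤ 1
    nlinarith [hs.1, hs.2]
  have hpt : ∀ s : ℝ, s ∈ Set.Ioc (0:ℝ) 1 →
      2 * (1 - s^2) ^ (μ/2-1) = (g ∘ fun s : ℝ => s ^ 2) s * (2 * s) := by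
    intro s hs
    have h1 : ((s:ℝ)^2) ^ (-(1/2):ℝ) = s⁻¹ := by
      rw [← Real.rpow_natCast s 2, ← Real.rpow_mul hs.1.le]
      norm_num [Real.rpow_neg_one]
    simp only [hgdef, Function.comp]
    rw [h1]
    have hs0 : s ≠ 0 := ne_of_gt hs.1
    field_simp
  have hsub : (∫ s in (0:ℝ)..1, (g ∘ fun s : ℝ => s ^ 2) s * (2 * s)) = J := by
    have hres := integral_comp_mul_deriv''' (a := 0) (b := 1)
      (f := fun s : ℝ => s ^ 2) (f' := fun s : ℝ => 2 * s) (g := g)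
      (by fun_prop)
      (fun x hx => by simpa using (hasDerivAt_pow 2 x).hasDerivWithinAt)
      ?_ (hgint.mono_set himg) ?_
    · simpa using hres
    · refine ContinuousOn.mono (s := Set.Ioo (0:ℝ) 1) ?_ ?_
      · intro x hx
        refine ContinuousAt.continuousWithinAt ?_
        refine (Real.continuousAt_rpow_const x _ (Or.inl hx.1.ne')).mul ?_
        exact (Real.continuousAt_rpow_const (1-x) _
          (Or.inl (by have := hx.2; intro h; rw [sub_eq_zero] at h; linarith))).comp
          ((continuous_const.sub continuous_id).continuousAt)
      · rintro _ ⟨s, hs, rfl⟩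
        simp only [min_self, zero_lt_one, min_eq_left, max_eq_right, zero_le_one] at hs
        have hs1 : 0 < s := hs.1
        have hs2 : s < 1 := hs.2
        refine ⟨?_, ?_⟩
        · show 0 < s ^ 2
          positivity
        · show s ^ 2 < 1
          nlinarith
    · rw [Set.uIcc_of_le zero_le_one, integrableOn_Icc_iff_integrableOn_Ioc]
      have hK2 : IntegrableOn (fun s : ℝ => 2 * (1 - s^2) ^ (μ/2-1)) (Set.Ioc 0 1) := by
        have h := (K_integrable hμ).const_mul 2
        rwa [intervalIntegrable_iff, Set.uIoc_of_le zero_le_one] at h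
      exact MeasureTheory.IntegrableOn.congr_fun hK2 hpt measurableSet_Ioc
  have h2K : (∫ s in (0:ℝ)..1, (g ∘ fun s : ℝ => s ^ 2) s * (2 * s))
      = 2 * ∫ s in (0:ℝ)..1, (1 - s^2) ^ (μ/2-1) := by
    rw [← intervalIntegral.integral_const_mul]
    refine intervalIntegral.integral_congr_ae (MeasureTheory.ae_of_all _ fun s hs => ?_)
    rw [Set.uIoc_of_le zero_le_one] at hs
    exact (hpt s hs).symm
  have h2 : 2 * ∫ s in (0:ℝ)..1, (1 - s^2) ^ (μ/2-1) = J := by rw [← h2K, hsub]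
  rw [Real.Gamma_one_half_eq] at hG
  have hΓ : (0:ℝ) < Real.Gamma ((μ+1)/2) := Real.Gamma_pos_of_pos (by linarith)
  rw [eq_div_iff (by positivity)]
  linear_combination Real.Gamma ((μ+1)/2) * h2 - hG

/-- The Poisson operator applied in the variable `t`:
`(𝒫^μ_t u)(x,t) = C(μ) t^{1-μ} ∫₀^t u(x,y)(t²-y²)^{μ/2-1} dy`. -/
noncomputable def poissonOpT (μ : ℝ) (u : ℝ → ℝ → ℝ) (x t : ℝ) : ℝ :=
  poissonC μ * t ^ (1 - μ) * ∫ y in (0 : ℝ)..t, u x y * (t ^ 2 - y ^ 2) ^ (μ / 2 - 1)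

/-- the Poisson operator in `t` preserves the initial data
`u(x,0) = f(x)`, `u_t(x,0) = 0`:
`(𝒫^μ_t u)(x,t) → f(x)` and `∂_t (𝒫^μ_t u)(x,t) → 0` as `t → 0⁺`. -/
theorem poisson_preserves_initial_data (μ : ℝ) (hμ : 0 < μ) (f : ℝ → ℝ) (u : ℝ → ℝ → ℝ)
    (hu : ContDiffOn ℝ 1 (fun p : ℝ × ℝ => u p.1 p.2) (Set.univ ×ˢ Set.Ici (0 : ℝ)))
    (hu0 : ∀ x : ℝ, u x 0 = f x)
    (hut0 : ∀ x : ℝ, derivWithin (u x) (Set.Ici (0 : ℝ)) 0 = 0) :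
    ∀ x : ℝ,
      Tendsto (fun t => poissonOpT μ u x t) (nhdsWithin 0 (Set.Ioi (0 : ℝ))) (nhds (f x)) ∧
      Tendsto (fun t => deriv (poissonOpT μ u x) t) (nhdsWithin 0 (Set.Ioi (0 : ℝ)))
        (nhds 0) := by
  intro x
  -- the one-dimensional slice
  set v : ℝ → ℝ := u x with hvdef
  have hv : ContDiffOn ℝ 1 v (Set.Ici 0) := by
    have hmk : ContDiff ℝ 1 (fun y : ℝ => ((x : ℝ), y)) := contDiff_const.prodMk contDiff_id
    exact hu.comp (hmk.contDiffOn (s := Set.Ici (0:ℝ)))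
      (fun y hy => ⟨Set.mem_univ x, hy⟩)
  have hvc : ContinuousOn v (Set.Ici 0) := hv.continuousOn
  set w : ℝ → ℝ := derivWithin v (Set.Ici 0) with hwdef
  have hwc : ContinuousOn w (Set.Ici 0) :=
    hv.continuousOn_derivWithin (uniqueDiffOn_Ici 0) le_rfl
  have hw0 : w 0 = 0 := hut0 x
  have hv0 : v 0 = f x := hu0 x
  have hvd : ∀ y : ℝ, 0 < y → HasDerivAt v (w y) y := by
    intro y hy
    have hmem : Set.Ici (0:ℝ) ∈ nhds y := Ici_mem_nhds hy
    have hd := (hv.differentiableOn one_ne_zero) y (le_of_lt hy)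
    rw [hwdef, derivWithin_of_mem_nhds hmem]
    exact (hd.differentiableAt hmem).hasDerivAt
  -- the kernel
  set K : ℝ → ℝ := fun s => (1 - s ^ 2) ^ (μ / 2 - 1) with hKdef
  have hKint : IntervalIntegrable K volume 0 1 := K_integrable hμ
  have hKnn : ∀ s : ℝ, s ∈ Set.Ioc (0:ℝ) 1 → 0 ≤ K s := fun s hs =>
    Real.rpow_nonneg (by nlinarith [hs.1.le, hs.2]) _
  have hKmeas : Measurable K := by fun_prop
  -- bounds on [0,1]
  obtain ⟨Mv, hMv⟩ := (isCompact_Icc (a := (0:ℝ)) (b := 1)).exists_bound_of_continuousOn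
    (hvc.mono (fun y hy => hy.1))
  obtain ⟨Mw, hMw⟩ := (isCompact_Icc (a := (0:ℝ)) (b := 1)).exists_bound_of_continuousOn
    (hwc.mono (fun y hy => hy.1))
  -- rescaled integrals
  set g : ℝ → ℝ := fun t => ∫ s in (0:ℝ)..1, v (t * s) * K s with hgdef
  set G : ℝ → ℝ := fun t => ∫ s in (0:ℝ)..1, w (t * s) * s * K s with hGdef
  -- measurability
  have hmeasv : ∀ t : ℝ, 0 ≤ t →
      AEStronglyMeasurable (fun s => v (t * s) * K s)
        (volume.restrict (Set.uIoc (0:ℝ) 1)) := by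
    intro t ht
    rw [Set.uIoc_of_le (zero_le_one' ℝ)]
    refine AEStronglyMeasurable.mul ?_ hKmeas.aestronglyMeasurable
    refine ContinuousOn.aestronglyMeasurable ?_ measurableSet_Ioc
    refine hvc.comp (continuous_const.mul continuous_id).continuousOn ?_
    intro s hs
    exact mul_nonneg ht hs.1.le
  have hmeasw : ∀ t : ℝ, 0 ≤ t →
      AEStronglyMeasurable (fun s => w (t * s) * s * K s)
        (volume.restrict (Set.uIoc (0:ℝ) 1)) := by
    intro t ht
    rw [Set.uIoc_of_le (zero_le_one' ℝ)]
    refine AEStronglyMeasurable.mul (AEStronglyMeasurable.mul ?_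
      measurable_id.aestronglyMeasurable) hKmeas.aestronglyMeasurable
    refine ContinuousOn.aestronglyMeasurable ?_ measurableSet_Ioc
    refine hwc.comp (continuous_const.mul continuous_id).continuousOn ?_
    intro s hs
    exact mul_nonneg ht hs.1.le
  -- integrability of the integrand of g
  have hvint : ∀ t : ℝ, 0 ≤ t → t ≤ 1 →
      IntervalIntegrable (fun s => v (t * s) * K s) volume 0 1 := by
    intro t ht ht1
    refine (hKint.const_mul Mv).mono_fun (hmeasv t ht) ?_
    rw [Set.uIoc_of_le (zero_le_one' ℝ)]
    filter_upwards [ae_restrict_mem measurableSet_Ioc] with s hs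
    have h1 : 0 ≤ t * s := mul_nonneg ht hs.1.le
    have h2 : t * s ≤ 1 := by nlinarith [hs.1.le, hs.2]
    have hb : ‖v (t*s) * K s‖ ≤ Mv * K s := by
      rw [norm_mul, Real.norm_of_nonneg (hKnn s hs)]
      exact mul_le_mul_of_nonneg_right (hMv _ ⟨h1, h2⟩) (hKnn s hs)
    exact hb.trans (le_abs_self _)
  -- normalization
  have hC1 : poissonC μ * ∫ s in (0:ℝ)..1, K s = 1 := by
    rw [hKdef, K_value hμ, poissonC]
    have h1 : 0 < Real.Gamma (μ/2) := Real.Gamma_pos_of_pos (half_pos hμ)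
    have h2 : 0 < Real.Gamma ((μ+1)/2) := Real.Gamma_pos_of_pos (by linarith)
    have h3 : 0 < Real.sqrt Real.pi := Real.sqrt_pos.mpr Real.pi_pos
    field_simp
  -- the change of variables y = t s
  have hgeq : ∀ t : ℝ, 0 < t → poissonOpT μ u x t = poissonC μ * g t := by
    intro t ht
    have hchg : (t : ℝ) • (∫ s in (0:ℝ)..1, v (t * s) * (t ^ 2 - (t * s) ^ 2) ^ (μ/2 - 1))
        = ∫ y in (0:ℝ)..t, v y * (t ^ 2 - y ^ 2) ^ (μ/2 - 1) := by
      simpa using intervalIntegral.smul_integral_comp_mul_left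
        (fun y => v y * (t ^ 2 - y ^ 2) ^ (μ/2 - 1)) (a := 0) (b := 1) t
    have hinner : ∫ s in (0:ℝ)..1, v (t * s) * (t ^ 2 - (t * s) ^ 2) ^ (μ/2-1)
        = t ^ (μ - 2) * g t := by
      rw [hgdef, ← intervalIntegral.integral_const_mul]
      refine intervalIntegral.integral_congr fun s hs => ?_
      rw [Set.uIcc_of_le (zero_le_one' ℝ)] at hs
      have h1 : t ^ 2 - (t * s) ^ 2 = t ^ 2 * (1 - s ^ 2) := by ring
      have h2 : (0:ℝ) ≤ 1 - s ^ 2 := by nlinarith [hs.1, hs.2]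
      rw [h1, Real.mul_rpow (by positivity) h2]
      have h3 : ((t:ℝ) ^ 2) ^ (μ/2-1 : ℝ) = t ^ (μ - 2) := by
        rw [← Real.rpow_natCast t 2, ← Real.rpow_mul ht.le,
          show ((2:ℕ):ℝ) * (μ/2-1) = μ - 2 by push_cast; ring]
      rw [h3, hKdef]
      ring
    have hpow : t ^ (1-μ) * t ^ (μ-2) * t = 1 := by
      rw [← Real.rpow_add ht, show (1-μ)+(μ-2) = (-1:ℝ) by ring, Real.rpow_neg_one]
      exact inv_mul_cancel₀ (ne_of_gt ht)
    have : poissonOpT μ u x t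
        = poissonC μ * t ^ (1-μ) * (t • ∫ s in (0:ℝ)..1,
            v (t * s) * (t ^ 2 - (t * s) ^ 2) ^ (μ/2-1)) := by
      rw [hchg]; rfl
    rw [this, hinner, smul_eq_mul]
    calc poissonC μ * t ^ (1-μ) * (t * (t ^ (μ-2) * g t))
        = poissonC μ * (t ^ (1-μ) * t ^ (μ-2) * t) * g t := by ring
      _ = poissonC μ * g t := by rw [hpow]; ring
  -- continuity of g at 0 within [0,∞)
  have ht01 : ∀ᶠ t in nhdsWithin (0:ℝ) (Set.Ici 0), t ∈ Set.Icc (0:ℝ) 1 := by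
    have h1 : ∀ᶠ t in nhdsWithin (0:ℝ) (Set.Ici 0), t ∈ Set.Ici (0:ℝ) :=
      eventually_mem_nhdsWithin
    have h2 : ∀ᶠ t in nhdsWithin (0:ℝ) (Set.Ici 0), t ≤ 1 := by
      have := eventually_le_nhds (show (0:ℝ) < 1 by norm_num)
      exact this.filter_mono nhdsWithin_le_nhds
    filter_upwards [h1, h2] with t h1 h2 using ⟨h1, h2⟩
  have hg_cw : ContinuousWithinAt g (Set.Ici 0) 0 := by
    apply intervalIntegral.continuousWithinAt_of_dominated_interval
      (bound := fun s => Mv * K s)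
    · filter_upwards [eventually_mem_nhdsWithin] with t ht
      exact hmeasv t ht
    · filter_upwards [ht01] with t ht
      refine MeasureTheory.ae_of_all _ fun s hs => ?_
      rw [Set.uIoc_of_le (zero_le_one' ℝ)] at hs
      have h1 : 0 ≤ t * s := mul_nonneg ht.1 hs.1.le
      have h2 : t * s ≤ 1 := by nlinarith [hs.1.le, hs.2, ht.1, ht.2]
      rw [norm_mul, Real.norm_of_nonneg (hKnn s hs)]
      exact mul_le_mul_of_nonneg_right (hMv _ ⟨h1, h2⟩) (hKnn s hs)
    · exact hKint.const_mul Mv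
    · refine MeasureTheory.ae_of_all _ fun s hs => ?_
      rw [Set.uIoc_of_le (zero_le_one' ℝ)] at hs
      refine ContinuousWithinAt.mul ?_ continuousWithinAt_const
      have hmul : ContinuousWithinAt (fun t : ℝ => t * s) (Set.Ici 0) 0 :=
        (continuous_id.mul continuous_const).continuousWithinAt
      have hmaps : Set.MapsTo (fun t : ℝ => t * s) (Set.Ici 0) (Set.Ici 0) :=
        fun t ht => mul_nonneg ht hs.1.le
      have hmul' : Tendsto (fun t : ℝ => t * s) (nhdsWithin 0 (Set.Ici 0))
          (nhdsWithin 0 (Set.Ici 0)) := by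
        simpa using hmul.tendsto_nhdsWithin hmaps
      show Tendsto (fun t : ℝ => v (t * s)) (nhdsWithin 0 (Set.Ici 0)) (nhds (v (0 * s)))
      rw [zero_mul]
      exact (hvc 0 Set.self_mem_Ici).tendsto.comp hmul'
  have hg0 : g 0 = f x * ∫ s in (0:ℝ)..1, K s := by
    rw [hgdef, ← intervalIntegral.integral_const_mul]
    refine intervalIntegral.integral_congr fun s hs => ?_
    simp [hv0]
  -- Part 1
  have htend1 : Tendsto (fun t => poissonOpT μ u x t)
      (nhdsWithin 0 (Set.Ioi (0:ℝ))) (nhds (f x)) := by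
    have h1 : Tendsto g (nhdsWithin 0 (Set.Ioi (0:ℝ))) (nhds (g 0)) :=
      hg_cw.mono_left (nhdsWithin_mono 0 Set.Ioi_subset_Ici_self)
    have h2 : Tendsto (fun t => poissonC μ * g t) (nhdsWithin 0 (Set.Ioi (0:ℝ)))
        (nhds (poissonC μ * g 0)) := tendsto_const_nhds.mul h1
    have h3 : poissonC μ * g 0 = f x := by
      rw [hg0, show poissonC μ * (f x * ∫ s in (0:ℝ)..1, K s)
        = f x * (poissonC μ * ∫ s in (0:ℝ)..1, K s) by ring, hC1, mul_one]
    rw [h3] at h2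
    refine Tendsto.congr' ?_ h2
    filter_upwards [eventually_mem_nhdsWithin] with t ht
    exact (hgeq t ht).symm
  -- derivative of g
  have hG_deriv : ∀ t : ℝ, t ∈ Set.Ioo (0:ℝ) (1/2) → HasDerivAt g (G t) t := by
    intro t ht
    have hε : (0:ℝ) < t/2 := by linarith [ht.1]
    have hball : ∀ t' : ℝ, t' ∈ Metric.ball t (t/2) → 0 < t' ∧ t' ≤ 1 := by
      intro t' ht'
      rw [Metric.mem_ball, Real.dist_eq, abs_sub_lt_iff] at ht'
      constructor <;> [linarith [ht'.2, ht.1]; linarith [ht'.1, ht.2]]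
    have hmain := intervalIntegral.hasDerivAt_integral_of_dominated_loc_of_deriv_le
      (F := fun t s => v (t * s) * K s) (F' := fun t s => w (t * s) * s * K s)
      (x₀ := t) (a := 0) (b := 1) (bound := fun s => Mw * K s) (Metric.ball_mem_nhds t hε)
      ?_ (hvint t ht.1.le (by linarith [ht.2])) (hmeasw t ht.1.le) ?_
      (hKint.const_mul Mw) ?_
    · exact hmain.2
    · filter_upwards [eventually_gt_nhds ht.1] with t' ht'
      exact hmeasv t' ht'.le
    · refine MeasureTheory.ae_of_all _ fun s hs t' ht' => ?_
      rw [Set.uIoc_of_le (zero_le_one' ℝ)] at hs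
      obtain ⟨h1, h2⟩ := hball t' ht'
      have h3 : 0 ≤ t' * s := mul_nonneg h1.le hs.1.le
      have h4 : t' * s ≤ 1 := by nlinarith [hs.1.le, hs.2]
      rw [norm_mul, norm_mul, Real.norm_of_nonneg (hKnn s hs)]
      have h5 : ‖w (t' * s)‖ * ‖s‖ ≤ Mw * 1 := by
        refine mul_le_mul (hMw _ ⟨h3, h4⟩) ?_ (norm_nonneg _)
          ((norm_nonneg _).trans (hMw _ ⟨h3, h4⟩))
        rw [Real.norm_of_nonneg hs.1.le]
        exact hs.2
      calc ‖w (t' * s)‖ * ‖s‖ * K s ≤ Mw * 1 * K s :=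
            mul_le_mul_of_nonneg_right h5 (hKnn s hs)
        _ = Mw * K s := by ring
    · refine MeasureTheory.ae_of_all _ fun s hs t' ht' => ?_
      rw [Set.uIoc_of_le (zero_le_one' ℝ)] at hs
      obtain ⟨h1, h2⟩ := hball t' ht'
      have hpos : 0 < t' * s := mul_pos h1 hs.1
      have hd1 : HasDerivAt (fun t : ℝ => t * s) s t' := hasDerivAt_mul_const s
      have hd2 : HasDerivAt v (w (t' * s)) ((fun t : ℝ => t * s) t') := hvd _ hpos
      have := (hd2.comp t' hd1).mul_const (K s)
      simpa [Function.comp] using this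
  -- continuity of G at 0 within [0,∞)
  have hG_cw : ContinuousWithinAt G (Set.Ici 0) 0 := by
    apply intervalIntegral.continuousWithinAt_of_dominated_interval
      (bound := fun s => Mw * K s)
    · filter_upwards [eventually_mem_nhdsWithin] with t ht
      exact hmeasw t ht
    · filter_upwards [ht01] with t ht
      refine MeasureTheory.ae_of_all _ fun s hs => ?_
      rw [Set.uIoc_of_le (zero_le_one' ℝ)] at hs
      have h1 : 0 ≤ t * s := mul_nonneg ht.1 hs.1.le
      have h2 : t * s ≤ 1 := by nlinarith [hs.1.le, hs.2, ht.1, ht.2]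
      rw [norm_mul, norm_mul, Real.norm_of_nonneg (hKnn s hs)]
      have h5 : ‖w (t * s)‖ * ‖s‖ ≤ Mw * 1 := by
        refine mul_le_mul (hMw _ ⟨h1, h2⟩) ?_ (norm_nonneg _)
          ((norm_nonneg _).trans (hMw _ ⟨h1, h2⟩))
        rw [Real.norm_of_nonneg hs.1.le]
        exact hs.2
      calc ‖w (t * s)‖ * ‖s‖ * K s ≤ Mw * 1 * K s :=
            mul_le_mul_of_nonneg_right h5 (hKnn s hs)
        _ = Mw * K s := by ring
    · exact hKint.const_mul Mw
    · refine MeasureTheory.ae_of_all _ fun s hs => ?_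
      rw [Set.uIoc_of_le (zero_le_one' ℝ)] at hs
      refine ContinuousWithinAt.mul (ContinuousWithinAt.mul ?_
        continuousWithinAt_const) continuousWithinAt_const
      have hmul : ContinuousWithinAt (fun t : ℝ => t * s) (Set.Ici 0) 0 :=
        (continuous_id.mul continuous_const).continuousWithinAt
      have hmaps : Set.MapsTo (fun t : ℝ => t * s) (Set.Ici 0) (Set.Ici 0) :=
        fun t ht => mul_nonneg ht hs.1.le
      have hmul' : Tendsto (fun t : ℝ => t * s) (nhdsWithin 0 (Set.Ici 0))
          (nhdsWithin 0 (Set.Ici 0)) := by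
        simpa using hmul.tendsto_nhdsWithin hmaps
      show Tendsto (fun t : ℝ => w (t * s)) (nhdsWithin 0 (Set.Ici 0)) (nhds (w (0 * s)))
      rw [zero_mul]
      exact (hwc 0 Set.self_mem_Ici).tendsto.comp hmul'
  have hG0 : G 0 = 0 := by
    rw [hGdef]
    simp only [zero_mul, hw0]
    simp
  -- Part 2
  have htend2 : Tendsto (fun t => deriv (poissonOpT μ u x) t)
      (nhdsWithin 0 (Set.Ioi (0:ℝ))) (nhds 0) := by
    have h1 : Tendsto G (nhdsWithin 0 (Set.Ioi (0:ℝ))) (nhds 0) := by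
      have := hG_cw.mono_left (nhdsWithin_mono 0 Set.Ioi_subset_Ici_self)
      rwa [hG0] at this
    have h2 : Tendsto (fun t => poissonC μ * G t) (nhdsWithin 0 (Set.Ioi (0:ℝ)))
        (nhds 0) := by
      simpa using (tendsto_const_nhds (x := poissonC μ)).mul h1
    refine Tendsto.congr' ?_ h2
    have h12 : ∀ᶠ t in nhdsWithin (0:ℝ) (Set.Ioi 0), t < 1/2 :=
      (eventually_lt_nhds (show (0:ℝ) < 1/2 by norm_num)).filter_mono nhdsWithin_le_nhds
    filter_upwards [eventually_mem_nhdsWithin, h12] with t ht ht2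
    have hEq : poissonOpT μ u x =ᶠ[nhds t] fun t' => poissonC μ * g t' := by
      filter_upwards [Ioi_mem_nhds ht] with t' ht'
      exact hgeq t' ht'
    rw [hEq.deriv_eq]
    exact (((hG_deriv t ⟨ht, ht2⟩).const_mul (poissonC μ)).deriv).symm
  exact ⟨htend1, htend2⟩
end

section
/- Let 0 < μ < 1 and let Φ, Ψ : ℝ → ℝ be twice continuously differentiable. Then the function u(x,t) = ∫₀¹ Φ(x+t(2p−1))·(p(1−p))^{μ/2−1} dp + t^{1−μ}·∫₀¹ Ψ(x+t(2p−1))·(p(1−p))^{−μ/2} dp satisfies the Euler–Poisson–Darboux equation u_xx(x,t) = u_tt(x,t) + (μ/t)·u_t(x,t) for all x ∈ ℝ and t > 0. -/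
open MeasureTheory Real Set
open scoped Interval

noncomputable def ww (a p : ℝ) : ℝ := (p * (1 - p)) ^ a

lemma ww_def (a p : ℝ) : ww a p = (p * (1 - p)) ^ a := rfl

lemma measurable_ww (a : ℝ) : Measurable (ww a) := by
  have h1 : Measurable (fun p : ℝ => p * (1 - p)) := by fun_prop
  have h2 : Measurable (fun x : ℝ => x ^ a) := by measurability
  exact h2.comp h1

lemma aesm_ww (a : ℝ) : AEStronglyMeasurable (ww a) (volume.restrict (Ι (0:ℝ) 1)) :=
  (measurable_ww a).aestronglyMeasurable

lemma ww_nonneg (a p : ℝ) (h0 : 0 ≤ p) (h1 : p ≤ 1) : 0 ≤ ww a p :=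
  Real.rpow_nonneg (mul_nonneg h0 (by linarith)) a

lemma ww_succ (a p : ℝ) (ha : a + 1 ≠ 0) : ww (a + 1) p = (p * (1 - p)) * ww a p := by
  by_cases hb : p * (1 - p) = 0
  · rw [ww_def, ww_def, hb, Real.zero_rpow ha]; ring
  · rw [ww_def, ww_def, Real.rpow_add_one hb]; ring

lemma cont_ww {a : ℝ} (ha : 0 < a) : Continuous (ww a) := by
  rw [continuous_iff_continuousAt]
  intro p
  exact (Real.continuousAt_rpow_const _ _ (Or.inr ha.le)).comp (by fun_prop)

lemma intervalIntegrable_ww {a : ℝ} (ha : -1 < a) (ha0 : a < 0) :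
    IntervalIntegrable (ww a) volume 0 1 := by
  have h1 : IntervalIntegrable (ww a) volume 0 (1/2) := by
    have hg : IntervalIntegrable (fun p : ℝ => (2:ℝ) ^ (-a) * p ^ a) volume 0 (1/2) :=
      (intervalIntegral.intervalIntegrable_rpow' ha).const_mul _
    apply hg.mono_fun ((measurable_ww a).aestronglyMeasurable)
    rw [Filter.EventuallyLE, ae_restrict_iff' measurableSet_uIoc]
    refine Filter.Eventually.of_forall (fun p hp => ?_)
    rw [Set.uIoc_of_le (by norm_num : (0:ℝ) ≤ 1/2)] at hp
    obtain ⟨hp0, hp1⟩ := hp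
    have hb : (0:ℝ) < p / 2 := by linarith
    have h2 : p / 2 ≤ p * (1 - p) := by nlinarith
    have hle : ww a p ≤ (p / 2) ^ a := Real.rpow_le_rpow_of_nonpos hb h2 ha0.le
    have hdiv : (p / 2) ^ a = (2:ℝ) ^ (-a) * p ^ a := by
      rw [Real.div_rpow hp0.le (by norm_num), Real.rpow_neg (by norm_num)]
      ring
    have hnn : 0 ≤ ww a p := ww_nonneg a p hp0.le (by linarith)
    have hnn2 : (0:ℝ) ≤ (2:ℝ) ^ (-a) * p ^ a :=
      mul_nonneg (Real.rpow_nonneg (by norm_num) _) (Real.rpow_nonneg hp0.le _)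
    simp only [Real.norm_eq_abs, abs_of_nonneg hnn, abs_of_nonneg hnn2]
    rw [← hdiv]; exact hle
  have h2 : IntervalIntegrable (ww a) volume (1/2) 1 := by
    have h3 := h1.comp_sub_left 1
    have heq : (fun x : ℝ => ww a (1 - x)) = ww a := by
      funext p; rw [ww_def, ww_def]; congr 1; ring
    rw [heq] at h3
    norm_num at h3
    exact h3.symm
  exact h1.trans h2

lemma intInt_mul {G : ℝ → ℝ} (hGi : IntervalIntegrable G volume 0 1)
    (hGm : AEStronglyMeasurable G (volume.restrict (Ι (0:ℝ) 1)))
    {g : ℝ → ℝ} (hg : Continuous g) :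
    IntervalIntegrable (fun p => g p * G p) volume 0 1 := by
  obtain ⟨C, hC⟩ := (isCompact_Icc (a := (0:ℝ)) (b := 1)).exists_bound_of_continuousOn
    hg.continuousOn
  have hC0 : 0 ≤ C := le_trans (norm_nonneg _) (hC 0 (by norm_num))
  apply (hGi.norm.const_mul C).mono_fun (hg.aestronglyMeasurable.mul hGm)
  rw [Filter.EventuallyLE, ae_restrict_iff' measurableSet_uIoc]
  refine Filter.Eventually.of_forall (fun p hp => ?_)
  rw [Set.uIoc_of_le (by norm_num : (0:ℝ) ≤ 1)] at hp
  have hmem : p ∈ Set.Icc (0:ℝ) 1 := ⟨hp.1.le, hp.2⟩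
  simp only [Pi.mul_apply, norm_mul]
  have h2 : ‖g p‖ * ‖G p‖ ≤ C * ‖G p‖ :=
    mul_le_mul_of_nonneg_right (hC p hmem) (norm_nonneg _)
  calc ‖g p‖ * ‖G p‖ ≤ C * ‖G p‖ := h2
    _ = ‖C‖ * ‖‖G p‖‖ := by simp [Real.norm_eq_abs, abs_of_nonneg hC0]

lemma abs_two_mul_sub_one_le {p : ℝ} (hp : p ∈ Ι (0:ℝ) 1) : |2 * p - 1| ≤ 1 := by
  rw [Set.uIoc_of_le (by norm_num : (0:ℝ) ≤ 1)] at hp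
  rw [abs_le]; constructor <;> linarith [hp.1, hp.2]

lemma hasDerivAt_int_x (f G : ℝ → ℝ) (hf : ContDiff ℝ 1 f)
    (hGi : IntervalIntegrable G volume 0 1)
    (hGm : AEStronglyMeasurable G (volume.restrict (Ι (0:ℝ) 1))) (x t : ℝ) :
    HasDerivAt (fun y => ∫ p in (0:ℝ)..1, f (y + t * (2 * p - 1)) * G p)
      (∫ p in (0:ℝ)..1, deriv f (x + t * (2 * p - 1)) * G p) x := by
  set R : ℝ := |x| + 1 + |t| with hR
  have hfc : Continuous f := hf.continuous
  have hfd : Continuous (deriv f) := hf.continuous_deriv le_rfl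
  obtain ⟨C, hC⟩ := (isCompact_Icc (a := -R) (b := R)).exists_bound_of_continuousOn
    hfd.continuousOn
  obtain ⟨C₀, hC₀⟩ := (isCompact_Icc (a := -R) (b := R)).exists_bound_of_continuousOn
    hfc.continuousOn
  have hmem : ∀ y : ℝ, y ∈ Metric.ball x 1 → ∀ p ∈ Ι (0:ℝ) 1,
      y + t * (2 * p - 1) ∈ Set.Icc (-R) R := by
    intro y hy p hp
    have h1 : |2 * p - 1| ≤ 1 := abs_two_mul_sub_one_le hp
    have h2 : |y - x| < 1 := by simpa [Real.dist_eq] using hy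
    have h3 : |y + t * (2 * p - 1)| ≤ R := by
      calc |y + t * (2 * p - 1)| ≤ |y| + |t * (2 * p - 1)| := abs_add_le _ _
        _ ≤ (|x| + 1) + |t| * 1 := by
            gcongr
            · calc |y| = |x + (y - x)| := by ring_nf
                _ ≤ |x| + |y - x| := abs_add_le _ _
                _ ≤ |x| + 1 := by linarith
            · rw [abs_mul]; gcongr
        _ = R := by rw [hR]; ring
    exact abs_le.mp h3
  refine (intervalIntegral.hasDerivAt_integral_of_dominated_loc_of_deriv_le
    (F' := fun y p => deriv f (y + t * (2 * p - 1)) * G p)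
    (bound := fun p => |C| * ‖G p‖) (Metric.ball_mem_nhds _ one_pos) ?_ ?_ ?_ ?_ ?_ ?_).2
  · exact Filter.Eventually.of_forall fun y =>
      ((hfc.comp (by fun_prop)).aestronglyMeasurable.mul hGm)
  · apply (hGi.norm.const_mul |C₀|).mono_fun
      ((hfc.comp (by fun_prop)).aestronglyMeasurable.mul hGm)
    rw [Filter.EventuallyLE, ae_restrict_iff' measurableSet_uIoc]
    refine Filter.Eventually.of_forall (fun p hp => ?_)
    have hm := hmem x (Metric.mem_ball_self one_pos) p hp
    simp only [Pi.mul_apply, Function.comp_apply, norm_mul]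
    have : ‖f (x + t * (2 * p - 1))‖ ≤ |C₀| := le_trans (hC₀ _ hm) (le_abs_self _)
    calc ‖f (x + t * (2 * p - 1))‖ * ‖G p‖ ≤ |C₀| * ‖G p‖ :=
          mul_le_mul_of_nonneg_right this (norm_nonneg _)
      _ = ‖|C₀|‖ * ‖‖G p‖‖ := by simp
  · exact (hfd.comp (by fun_prop)).aestronglyMeasurable.mul hGm
  · refine Filter.Eventually.of_forall (fun p hp y hy => ?_)
    have hm := hmem y hy p hp
    simp only [norm_mul]
    have : ‖deriv f (y + t * (2 * p - 1))‖ ≤ |C| := le_trans (hC _ hm) (le_abs_self _)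
    exact mul_le_mul_of_nonneg_right this (norm_nonneg _)
  · exact hGi.norm.const_mul _
  · refine Filter.Eventually.of_forall (fun p _ y _ => ?_)
    have h1 : HasDerivAt (fun y : ℝ => y + t * (2 * p - 1)) 1 y :=
      (hasDerivAt_id y).add_const _
    have h2 : HasDerivAt f (deriv f (y + t * (2 * p - 1))) (y + t * (2 * p - 1)) :=
      (hf.differentiable one_ne_zero _).hasDerivAt
    simpa using (h2.comp y h1).mul_const (G p)

lemma hasDerivAt_int_t (f G : ℝ → ℝ) (hf : ContDiff ℝ 1 f)
    (hGi : IntervalIntegrable G volume 0 1)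
    (hGm : AEStronglyMeasurable G (volume.restrict (Ι (0:ℝ) 1))) (x t : ℝ) :
    HasDerivAt (fun y => ∫ p in (0:ℝ)..1, f (x + y * (2 * p - 1)) * G p)
      (∫ p in (0:ℝ)..1, deriv f (x + t * (2 * p - 1)) * ((2 * p - 1) * G p)) t := by
  set R : ℝ := |x| + |t| + 1 with hR
  have hfc : Continuous f := hf.continuous
  have hfd : Continuous (deriv f) := hf.continuous_deriv le_rfl
  obtain ⟨C, hC⟩ := (isCompact_Icc (a := -R) (b := R)).exists_bound_of_continuousOn
    hfd.continuousOn
  obtain ⟨C₀, hC₀⟩ := (isCompact_Icc (a := -R) (b := R)).exists_bound_of_continuousOn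
    hfc.continuousOn
  have hmem : ∀ y : ℝ, y ∈ Metric.ball t 1 → ∀ p ∈ Ι (0:ℝ) 1,
      x + y * (2 * p - 1) ∈ Set.Icc (-R) R := by
    intro y hy p hp
    have h1 : |2 * p - 1| ≤ 1 := abs_two_mul_sub_one_le hp
    have h2 : |y - t| < 1 := by simpa [Real.dist_eq] using hy
    have h3 : |x + y * (2 * p - 1)| ≤ R := by
      calc |x + y * (2 * p - 1)| ≤ |x| + |y * (2 * p - 1)| := abs_add_le _ _
        _ ≤ |x| + (|t| + 1) * 1 := by
            gcongr
            rw [abs_mul]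
            have : |y| ≤ |t| + 1 := by
              calc |y| = |t + (y - t)| := by ring_nf
                _ ≤ |t| + |y - t| := abs_add_le _ _
                _ ≤ |t| + 1 := by linarith
            gcongr
        _ = R := by rw [hR]; ring
    exact abs_le.mp h3
  refine (intervalIntegral.hasDerivAt_integral_of_dominated_loc_of_deriv_le
    (F' := fun y p => deriv f (x + y * (2 * p - 1)) * ((2 * p - 1) * G p))
    (bound := fun p => |C| * ‖G p‖) (Metric.ball_mem_nhds _ one_pos) ?_ ?_ ?_ ?_ ?_ ?_).2
  · exact Filter.Eventually.of_forall fun y =>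
      ((hfc.comp (by fun_prop)).aestronglyMeasurable.mul hGm)
  · apply (hGi.norm.const_mul |C₀|).mono_fun
      ((hfc.comp (by fun_prop)).aestronglyMeasurable.mul hGm)
    rw [Filter.EventuallyLE, ae_restrict_iff' measurableSet_uIoc]
    refine Filter.Eventually.of_forall (fun p hp => ?_)
    have hm := hmem t (Metric.mem_ball_self one_pos) p hp
    simp only [Pi.mul_apply, Function.comp_apply, norm_mul]
    have : ‖f (x + t * (2 * p - 1))‖ ≤ |C₀| := le_trans (hC₀ _ hm) (le_abs_self _)
    calc ‖f (x + t * (2 * p - 1))‖ * ‖G p‖ ≤ |C₀| * ‖G p‖ :=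
          mul_le_mul_of_nonneg_right this (norm_nonneg _)
      _ = ‖|C₀|‖ * ‖‖G p‖‖ := by simp
  · exact (hfd.comp (by fun_prop)).aestronglyMeasurable.mul
      ((by fun_prop : Continuous (fun p : ℝ => 2 * p - 1)).aestronglyMeasurable.mul hGm)
  · refine Filter.Eventually.of_forall (fun p hp y hy => ?_)
    have hm := hmem y hy p hp
    have h1 : |2 * p - 1| ≤ 1 := abs_two_mul_sub_one_le hp
    simp only [norm_mul]
    have h4 : ‖deriv f (x + y * (2 * p - 1))‖ ≤ |C| := le_trans (hC _ hm) (le_abs_self _)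
    calc ‖deriv f (x + y * (2 * p - 1))‖ * (‖2 * p - 1‖ * ‖G p‖)
        ≤ |C| * (1 * ‖G p‖) := by
          apply mul_le_mul h4 _ (by positivity) (abs_nonneg _)
          exact mul_le_mul_of_nonneg_right h1 (norm_nonneg _)
      _ = |C| * ‖G p‖ := by ring
  · exact hGi.norm.const_mul _
  · refine Filter.Eventually.of_forall (fun p _ y _ => ?_)
    have h1 : HasDerivAt (fun y : ℝ => x + y * (2 * p - 1)) (2 * p - 1) y := by
      simpa using ((hasDerivAt_id y).mul_const (2 * p - 1)).const_add x
    have h2 : HasDerivAt f (deriv f (x + y * (2 * p - 1))) (x + y * (2 * p - 1)) :=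
      (hf.differentiable one_ne_zero _).hasDerivAt
    have h3 := (h2.comp y h1).mul_const (G p)
    refine h3.congr_deriv ?_
    ring

lemma contDiff_one_deriv {f : ℝ → ℝ} (hf : ContDiff ℝ 2 f) : ContDiff ℝ 1 (deriv f) := by
  have h2 : ContDiff ℝ (1 + 1 : ℕ) f := by exact_mod_cast hf
  exact (contDiff_succ_iff_deriv.mp h2).2.2

lemma epd_key (f : ℝ → ℝ) (hf : ContDiff ℝ 2 f) {a : ℝ} (ha : -1 < a) (ha0 : a < 0)
    (x t : ℝ) (ht : t ≠ 0) :
    (∫ p in (0:ℝ)..1,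
        deriv (deriv f) (x + t * (2 * p - 1)) * ((2 * p - 1) * ((2 * p - 1) * ww a p)))
      + ((2 * a + 2) / t) *
        (∫ p in (0:ℝ)..1, deriv f (x + t * (2 * p - 1)) * ((2 * p - 1) * ww a p))
      = ∫ p in (0:ℝ)..1, deriv (deriv f) (x + t * (2 * p - 1)) * ww a p := by
  have ha1 : (0:ℝ) < a + 1 := by linarith
  have ha1' : a + 1 ≠ 0 := ne_of_gt ha1
  have hfd : ContDiff ℝ 1 (deriv f) := contDiff_one_deriv hf
  have hf1c : Continuous (deriv f) := hf.continuous_deriv one_le_two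
  have hf2c : Continuous (deriv (deriv f)) := hfd.continuous_deriv le_rfl
  have hline : Continuous (fun p : ℝ => x + t * (2 * p - 1)) := by fun_prop
  have hWa := intervalIntegrable_ww ha ha0
  have hW1c : Continuous (ww (a + 1)) := cont_ww ha1
  set Q : ℝ := ∫ p in (0:ℝ)..1, deriv (deriv f) (x + t * (2 * p - 1)) * ww (a + 1) p with hQdef
  set T : ℝ := ∫ p in (0:ℝ)..1, deriv f (x + t * (2 * p - 1)) * ((2 * p - 1) * ww a p) with hTdef
  -- integration by parts
  have key1 : (a + 1) * T = 2 * t * Q := by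
    set D₁ : ℝ → ℝ :=
      fun p => deriv (deriv f) (x + t * (2 * p - 1)) * (t * 2) * ww (a + 1) p with hD1
    set D₂ : ℝ → ℝ :=
      fun p => (deriv f (x + t * (2 * p - 1)) * ((a + 1) * (1 - 2 * p))) * ww a p with hD2
    have hD1i : IntervalIntegrable D₁ volume 0 1 :=
      (((hf2c.comp hline).mul continuous_const).mul hW1c).intervalIntegrable _ _
    have hD2i : IntervalIntegrable D₂ volume 0 1 := by
      apply intInt_mul hWa (aesm_ww a)
      exact (hf1c.comp hline).mul (by fun_prop)
    have hFTC : (∫ p in (0:ℝ)..1, (D₁ p + D₂ p)) =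
        (deriv f (x + t * (2 * 1 - 1)) * ww (a + 1) 1)
          - (deriv f (x + t * (2 * 0 - 1)) * ww (a + 1) 0) := by
      apply intervalIntegral.integral_eq_sub_of_hasDerivAt_of_le (a := 0) (b := 1)
        (f := fun p => deriv f (x + t * (2 * p - 1)) * ww (a + 1) p)
        (f' := fun p => D₁ p + D₂ p) (by norm_num)
      · exact ((hf1c.comp hline).mul hW1c).continuousOn
      · intro p hp
        obtain ⟨hp0, hp1⟩ := hp
        have hne : p * (1 - p) ≠ 0 := ne_of_gt (by nlinarith)
        have hlin : HasDerivAt (fun q : ℝ => x + t * (2 * q - 1)) (t * 2) p := by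
          have h := ((((hasDerivAt_id p).const_mul 2).sub_const 1).const_mul t).const_add x
          refine h.congr_deriv ?_; ring
        have hf' : HasDerivAt (fun q => deriv f (x + t * (2 * q - 1)))
            (deriv (deriv f) (x + t * (2 * p - 1)) * (t * 2)) p :=
          ((hfd.differentiable one_ne_zero _).hasDerivAt).comp p hlin
        have hb : HasDerivAt (fun q : ℝ => q * (1 - q)) (1 - 2 * p) p := by
          have h := (hasDerivAt_id p).mul ((hasDerivAt_id p).const_sub 1)
          simp only [id_eq] at h
          refine h.congr_deriv ?_; ring
        have hr : HasDerivAt (fun y : ℝ => y ^ (a + 1))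
            ((a + 1) * (p * (1 - p)) ^ (a + 1 - 1)) (p * (1 - p)) :=
          Real.hasDerivAt_rpow_const (Or.inl hne)
        have hw' : HasDerivAt (ww (a + 1)) ((a + 1) * (p * (1 - p)) ^ a * (1 - 2 * p)) p := by
          have h := hr.comp p hb
          rw [show a + 1 - 1 = a by ring] at h
          exact h
        have := hf'.mul hw'
        refine this.congr_deriv ?_
        simp only [hD1, hD2, ww_def]
        ring
      · exact hD1i.add hD2i
    have hw1 : ww (a + 1) 1 = 0 := by
      simp [ww_def, Real.zero_rpow ha1']
    have hw0 : ww (a + 1) 0 = 0 := by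
      simp [ww_def, Real.zero_rpow ha1']
    rw [hw1, hw0, intervalIntegral.integral_add hD1i hD2i] at hFTC
    have hQ1 : (∫ p in (0:ℝ)..1, D₁ p) = 2 * t * Q := by
      rw [hQdef, ← intervalIntegral.integral_const_mul]
      apply intervalIntegral.integral_congr
      intro p _
      simp only [hD1]; ring
    have hT1 : (∫ p in (0:ℝ)..1, D₂ p) = (-(a + 1)) * T := by
      rw [hTdef, ← intervalIntegral.integral_const_mul]
      apply intervalIntegral.integral_congr
      intro p _
      simp only [hD2]; ring
    rw [hQ1, hT1] at hFTC
    simp only [mul_zero, sub_zero] at hFTC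
    linarith
  -- moment identity
  have key2 : (∫ p in (0:ℝ)..1,
      deriv (deriv f) (x + t * (2 * p - 1)) * ((2 * p - 1) * ((2 * p - 1) * ww a p)))
      = (∫ p in (0:ℝ)..1, deriv (deriv f) (x + t * (2 * p - 1)) * ww a p) - 4 * Q := by
    have hptw : ∀ p : ℝ,
        deriv (deriv f) (x + t * (2 * p - 1)) * ((2 * p - 1) * ((2 * p - 1) * ww a p))
        = deriv (deriv f) (x + t * (2 * p - 1)) * ww a p
          - 4 * (deriv (deriv f) (x + t * (2 * p - 1)) * ww (a + 1) p) := by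
      intro p
      rw [ww_succ a p ha1']
      ring
    have h1 : IntervalIntegrable
        (fun p => deriv (deriv f) (x + t * (2 * p - 1)) * ww a p) volume 0 1 :=
      intInt_mul hWa (aesm_ww a) (hf2c.comp hline)
    have h2 : IntervalIntegrable
        (fun p => 4 * (deriv (deriv f) (x + t * (2 * p - 1)) * ww (a + 1) p)) volume 0 1 :=
      (continuous_const.mul ((hf2c.comp hline).mul hW1c)).intervalIntegrable _ _
    calc (∫ p in (0:ℝ)..1,
        deriv (deriv f) (x + t * (2 * p - 1)) * ((2 * p - 1) * ((2 * p - 1) * ww a p)))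
        = ∫ p in (0:ℝ)..1, (deriv (deriv f) (x + t * (2 * p - 1)) * ww a p
            - 4 * (deriv (deriv f) (x + t * (2 * p - 1)) * ww (a + 1) p)) := by
          apply intervalIntegral.integral_congr
          intro p _
          exact hptw p
      _ = (∫ p in (0:ℝ)..1, deriv (deriv f) (x + t * (2 * p - 1)) * ww a p)
          - ∫ p in (0:ℝ)..1, 4 * (deriv (deriv f) (x + t * (2 * p - 1)) * ww (a + 1) p) :=
          intervalIntegral.integral_sub h1 h2
      _ = (∫ p in (0:ℝ)..1, deriv (deriv f) (x + t * (2 * p - 1)) * ww a p) - 4 * Q := by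
          rw [hQdef, intervalIntegral.integral_const_mul]
  rw [key2]
  have h4 : (2 * a + 2) / t * T = 4 * Q := by
    rw [div_mul_eq_mul_div, div_eq_iff ht]
    linear_combination 2 * key1
  rw [h4]
  ring

/-- the general solution formula for the Euler–Poisson–Darboux equation:
for `0 < μ < 1` and `Φ, Ψ ∈ C²`, the function
`u(x,t) = ∫₀¹ Φ(x+t(2p-1)) (p(1-p))^{μ/2-1} dp + t^{1-μ} ∫₀¹ Ψ(x+t(2p-1)) (p(1-p))^{-μ/2} dp`
satisfies `u_xx = u_tt + (μ/t) u_t` for all `x ∈ ℝ`, `t > 0`. -/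
theorem epd_general_solution (μ : ℝ) (hμ0 : 0 < μ) (hμ1 : μ < 1) (Φ Ψ : ℝ → ℝ)
    (hΦ : ContDiff ℝ 2 Φ) (hΨ : ContDiff ℝ 2 Ψ)
    (u : ℝ → ℝ → ℝ)
    (hu : ∀ x t : ℝ, u x t =
      (∫ p in (0 : ℝ)..1, Φ (x + t * (2 * p - 1)) * (p * (1 - p)) ^ (μ / 2 - 1)) +
        t ^ (1 - μ) * ∫ p in (0 : ℝ)..1, Ψ (x + t * (2 * p - 1)) * (p * (1 - p)) ^ (-μ / 2)) :
    ∀ x t : ℝ, 0 < t →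
      deriv (deriv (fun x' => u x' t)) x =
        deriv (deriv (u x)) t + (μ / t) * deriv (u x) t := by
  intro x t ht
  have ht' : t ≠ 0 := ne_of_gt ht
  have ha1l : (-1:ℝ) < μ / 2 - 1 := by linarith
  have ha1r : μ / 2 - 1 < 0 := by linarith
  have ha2l : (-1:ℝ) < -μ / 2 := by linarith
  have ha2r : -μ / 2 < 0 := by linarith
  have hΦ1 : ContDiff ℝ 1 Φ := hΦ.of_le one_le_two
  have hΨ1 : ContDiff ℝ 1 Ψ := hΨ.of_le one_le_two
  have hΦd : ContDiff ℝ 1 (deriv Φ) := contDiff_one_deriv hΦ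
  have hΨd : ContDiff ℝ 1 (deriv Ψ) := contDiff_one_deriv hΨ
  have hW1i := intervalIntegrable_ww ha1l ha1r
  have hW2i := intervalIntegrable_ww ha2l ha2r
  have hW1m := aesm_ww (μ / 2 - 1)
  have hW2m := aesm_ww (-μ / 2)
  have hG1i : IntervalIntegrable (fun p => (2 * p - 1) * ww (μ / 2 - 1) p) volume 0 1 :=
    intInt_mul hW1i hW1m (by fun_prop)
  have hG2i : IntervalIntegrable (fun p => (2 * p - 1) * ww (-μ / 2) p) volume 0 1 :=
    intInt_mul hW2i hW2m (by fun_prop)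
  have hG1m : AEStronglyMeasurable (fun p => (2 * p - 1) * ww (μ / 2 - 1) p)
      (volume.restrict (Ι (0:ℝ) 1)) :=
    ((by fun_prop : Measurable fun p : ℝ => 2 * p - 1).mul
      (measurable_ww _)).aestronglyMeasurable
  have hG2m : AEStronglyMeasurable (fun p => (2 * p - 1) * ww (-μ / 2) p)
      (volume.restrict (Ι (0:ℝ) 1)) :=
    ((by fun_prop : Measurable fun p : ℝ => 2 * p - 1).mul
      (measurable_ww _)).aestronglyMeasurable
  have hufun : u = fun x t =>
      (∫ p in (0 : ℝ)..1, Φ (x + t * (2 * p - 1)) * ww (μ / 2 - 1) p) +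
        t ^ (1 - μ) * ∫ p in (0 : ℝ)..1, Ψ (x + t * (2 * p - 1)) * ww (-μ / 2) p :=
    funext fun x => funext fun t => hu x t
  simp only [hufun]
  -- x derivatives
  have hx1 : ∀ x' : ℝ, HasDerivAt
      (fun y => (∫ p in (0 : ℝ)..1, Φ (y + t * (2 * p - 1)) * ww (μ / 2 - 1) p) +
        t ^ (1 - μ) * ∫ p in (0 : ℝ)..1, Ψ (y + t * (2 * p - 1)) * ww (-μ / 2) p)
      ((∫ p in (0 : ℝ)..1, deriv Φ (x' + t * (2 * p - 1)) * ww (μ / 2 - 1) p) +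
        t ^ (1 - μ) * ∫ p in (0 : ℝ)..1, deriv Ψ (x' + t * (2 * p - 1)) * ww (-μ / 2) p) x' :=
    fun x' => (hasDerivAt_int_x Φ _ hΦ1 hW1i hW1m x' t).add
      (HasDerivAt.const_mul _ (hasDerivAt_int_x Ψ _ hΨ1 hW2i hW2m x' t))
  have hDx : (deriv fun x' =>
      (∫ p in (0 : ℝ)..1, Φ (x' + t * (2 * p - 1)) * ww (μ / 2 - 1) p) +
        t ^ (1 - μ) * ∫ p in (0 : ℝ)..1, Ψ (x' + t * (2 * p - 1)) * ww (-μ / 2) p)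
      = fun x' =>
      (∫ p in (0 : ℝ)..1, deriv Φ (x' + t * (2 * p - 1)) * ww (μ / 2 - 1) p) +
        t ^ (1 - μ) * ∫ p in (0 : ℝ)..1, deriv Ψ (x' + t * (2 * p - 1)) * ww (-μ / 2) p :=
    funext fun x' => (hx1 x').deriv
  rw [hDx]
  have hx2 : HasDerivAt
      (fun y => (∫ p in (0 : ℝ)..1, deriv Φ (y + t * (2 * p - 1)) * ww (μ / 2 - 1) p) +
        t ^ (1 - μ) * ∫ p in (0 : ℝ)..1, deriv Ψ (y + t * (2 * p - 1)) * ww (-μ / 2) p)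
      ((∫ p in (0 : ℝ)..1, deriv (deriv Φ) (x + t * (2 * p - 1)) * ww (μ / 2 - 1) p) +
        t ^ (1 - μ) * ∫ p in (0 : ℝ)..1, deriv (deriv Ψ) (x + t * (2 * p - 1)) * ww (-μ / 2) p)
      x :=
    (hasDerivAt_int_x (deriv Φ) _ hΦd hW1i hW1m x t).add
      (HasDerivAt.const_mul _ (hasDerivAt_int_x (deriv Ψ) _ hΨd hW2i hW2m x t))
  rw [hx2.deriv]
  -- t derivatives
  set g1 : ℝ → ℝ := fun s =>
    (∫ p in (0 : ℝ)..1, deriv Φ (x + s * (2 * p - 1)) * ((2 * p - 1) * ww (μ / 2 - 1) p)) +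
      ((1 - μ) * s ^ (1 - μ - 1) *
          (∫ p in (0 : ℝ)..1, Ψ (x + s * (2 * p - 1)) * ww (-μ / 2) p) +
        s ^ (1 - μ) *
          ∫ p in (0 : ℝ)..1, deriv Ψ (x + s * (2 * p - 1)) * ((2 * p - 1) * ww (-μ / 2) p))
    with hg1def
  have ht1 : ∀ s : ℝ, s ≠ 0 → HasDerivAt
      (fun y => (∫ p in (0 : ℝ)..1, Φ (x + y * (2 * p - 1)) * ww (μ / 2 - 1) p) +
        y ^ (1 - μ) * ∫ p in (0 : ℝ)..1, Ψ (x + y * (2 * p - 1)) * ww (-μ / 2) p)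
      (g1 s) s := by
    intro s hs
    have h := (hasDerivAt_int_t Φ _ hΦ1 hW1i hW1m x s).add
      ((Real.hasDerivAt_rpow_const (p := 1 - μ) (Or.inl hs)).mul
        (hasDerivAt_int_t Ψ _ hΨ1 hW2i hW2m x s))
    exact h
  have hev : (deriv fun y =>
      (∫ p in (0 : ℝ)..1, Φ (x + y * (2 * p - 1)) * ww (μ / 2 - 1) p) +
        y ^ (1 - μ) * ∫ p in (0 : ℝ)..1, Ψ (x + y * (2 * p - 1)) * ww (-μ / 2) p)
      =ᶠ[nhds t] g1 := by
    filter_upwards [Ioi_mem_nhds ht] with s hs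
    exact (ht1 s (ne_of_gt hs)).deriv
  rw [hev.deriv_eq, hev.self_of_nhds]
  -- derivative of g1 at t
  have hg1 : HasDerivAt g1
      ((∫ p in (0 : ℝ)..1, deriv (deriv Φ) (x + t * (2 * p - 1)) *
          ((2 * p - 1) * ((2 * p - 1) * ww (μ / 2 - 1) p))) +
        ((1 - μ) * ((1 - μ - 1) * t ^ (1 - μ - 1 - 1)) *
            (∫ p in (0 : ℝ)..1, Ψ (x + t * (2 * p - 1)) * ww (-μ / 2) p) +
          (1 - μ) * t ^ (1 - μ - 1) *
            (∫ p in (0 : ℝ)..1, deriv Ψ (x + t * (2 * p - 1)) * ((2 * p - 1) * ww (-μ / 2) p)) +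
          ((1 - μ) * t ^ (1 - μ - 1) *
              (∫ p in (0 : ℝ)..1, deriv Ψ (x + t * (2 * p - 1)) * ((2 * p - 1) * ww (-μ / 2) p)) +
            t ^ (1 - μ) *
              ∫ p in (0 : ℝ)..1, deriv (deriv Ψ) (x + t * (2 * p - 1)) *
                ((2 * p - 1) * ((2 * p - 1) * ww (-μ / 2) p))))) t := by
    rw [hg1def]
    apply (hasDerivAt_int_t (deriv Φ) _ hΦd hG1i hG1m x t).add
    apply HasDerivAt.add
    · exact (HasDerivAt.const_mul (1 - μ)
        (Real.hasDerivAt_rpow_const (p := 1 - μ - 1) (Or.inl ht'))).mul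
        (hasDerivAt_int_t Ψ _ hΨ1 hW2i hW2m x t)
    · exact (Real.hasDerivAt_rpow_const (p := 1 - μ) (Or.inl ht')).mul
        (hasDerivAt_int_t (deriv Ψ) _ hΨd hG2i hG2m x t)
  rw [hg1.deriv]
  simp only [hg1def]
  -- key identities
  have keyΦ := epd_key Φ hΦ ha1l ha1r x t ht'
  have keyΨ := epd_key Ψ hΨ ha2l ha2r x t ht'
  rw [show 2 * (μ / 2 - 1) + 2 = μ by ring] at keyΦ
  rw [show 2 * (-μ / 2) + 2 = 2 - μ by ring] at keyΨ
  have keyΦ' : t * (∫ p in (0 : ℝ)..1, deriv (deriv Φ) (x + t * (2 * p - 1)) *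
        ((2 * p - 1) * ((2 * p - 1) * ww (μ / 2 - 1) p))) +
      μ * (∫ p in (0 : ℝ)..1, deriv Φ (x + t * (2 * p - 1)) * ((2 * p - 1) * ww (μ / 2 - 1) p))
      = t * ∫ p in (0 : ℝ)..1, deriv (deriv Φ) (x + t * (2 * p - 1)) * ww (μ / 2 - 1) p := by
    rw [← keyΦ]; field_simp
  have keyΨ' : t * (∫ p in (0 : ℝ)..1, deriv (deriv Ψ) (x + t * (2 * p - 1)) *
        ((2 * p - 1) * ((2 * p - 1) * ww (-μ / 2) p))) +
      (2 - μ) * (∫ p in (0 : ℝ)..1, deriv Ψ (x + t * (2 * p - 1)) * ((2 * p - 1) * ww (-μ / 2) p))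
      = t * ∫ p in (0 : ℝ)..1, deriv (deriv Ψ) (x + t * (2 * p - 1)) * ww (-μ / 2) p := by
    rw [← keyΨ]; field_simp
  have e1 : t ^ (1 - μ) = t ^ (1 - μ - 1) * t := by
    rw [← Real.rpow_add_one ht' (1 - μ - 1)]; congr 1; ring
  have e2 : t ^ (1 - μ - 1) = t ^ (1 - μ - 1 - 1) * t := by
    rw [← Real.rpow_add_one ht' (1 - μ - 1 - 1)]; congr 1; ring
  rw [e1, e2]
  set A2 : ℝ := ∫ p in (0 : ℝ)..1, deriv (deriv Φ) (x + t * (2 * p - 1)) * ww (μ / 2 - 1) p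
  set AM : ℝ := ∫ p in (0 : ℝ)..1, deriv (deriv Φ) (x + t * (2 * p - 1)) *
    ((2 * p - 1) * ((2 * p - 1) * ww (μ / 2 - 1) p))
  set AT : ℝ := ∫ p in (0 : ℝ)..1, deriv Φ (x + t * (2 * p - 1)) *
    ((2 * p - 1) * ww (μ / 2 - 1) p)
  set B0 : ℝ := ∫ p in (0 : ℝ)..1, Ψ (x + t * (2 * p - 1)) * ww (-μ / 2) p
  set BT : ℝ := ∫ p in (0 : ℝ)..1, deriv Ψ (x + t * (2 * p - 1)) *
    ((2 * p - 1) * ww (-μ / 2) p)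
  set BM : ℝ := ∫ p in (0 : ℝ)..1, deriv (deriv Ψ) (x + t * (2 * p - 1)) *
    ((2 * p - 1) * ((2 * p - 1) * ww (-μ / 2) p))
  set B2 : ℝ := ∫ p in (0 : ℝ)..1, deriv (deriv Ψ) (x + t * (2 * p - 1)) * ww (-μ / 2) p
  set s3 : ℝ := t ^ (1 - μ - 1 - 1)
  field_simp
  linear_combination (-1 : ℝ) * keyΦ' - (s3 * t * t) * keyΨ'
end

section
/- Let μ > 0 and let f : ℝ → ℝ be twice continuously differentiable. Then the function u(x,t) = (Γ(μ)/Γ(μ/2)²)·∫₀¹ f(x+t(2p−1))·(p(1−p))^{μ/2−1} dp solves the Cauchy problem: u_xx = u_tt + (μ/t)·u_t for x ∈ ℝ, t > 0, with lim_{t→0+} u(x,t) = f(x) and lim_{t→0+} u_t(x,t) = 0 for every x ∈ ℝ. -/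
open MeasureTheory Real Filter intervalIntegral Set

section auxEPD

lemma aux_w_int {s : ℝ} (hs : -1 < s) :
    IntervalIntegrable (fun p => (p * (1 - p)) ^ s) volume 0 1 := by
  have h1 : IntervalIntegrable (fun p => (p * (1 - p)) ^ s) volume 0 (1/2) := by
    have hbase : IntervalIntegrable (fun p : ℝ => p ^ s) volume 0 (1/2) :=
      intervalIntegrable_rpow' hs
    have hcont : ContinuousOn (fun p : ℝ => (1 - p) ^ s) (uIcc 0 (1/2)) := by
      apply ContinuousOn.rpow_const (by fun_prop)
      intro x hx
      rw [uIcc_of_le (by norm_num)] at hx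
      left; nlinarith [hx.1, hx.2]
    refine (hbase.continuousOn_mul hcont).congr_ae ?_
    filter_upwards [ae_restrict_mem measurableSet_uIoc] with p hp
    rw [uIoc_of_le (by norm_num : (0:ℝ) ≤ 1/2)] at hp
    rw [← Real.mul_rpow (by linarith [hp.1, hp.2]) (by linarith [hp.1, hp.2]), mul_comm]
  have h2 : IntervalIntegrable (fun p => (p * (1 - p)) ^ s) volume (1/2) 1 := by
    have hbase : IntervalIntegrable (fun p : ℝ => (1 - p) ^ s) volume (1/2) 1 := by
      have := (intervalIntegrable_rpow' (a := 0) (b := 1/2) (r := s) hs).comp_sub_left 1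
      norm_num at this
      exact this.symm
    have hcont : ContinuousOn (fun p : ℝ => p ^ s) (uIcc (1/2) 1) := by
      apply ContinuousOn.rpow_const (by fun_prop)
      intro x hx
      rw [uIcc_of_le (by norm_num)] at hx
      left; nlinarith [hx.1]
    refine (hbase.continuousOn_mul hcont).congr_ae ?_
    filter_upwards [ae_restrict_mem measurableSet_uIoc] with p hp
    rw [uIoc_of_le (by norm_num : (1:ℝ)/2 ≤ 1)] at hp
    rw [← Real.mul_rpow (by linarith [hp.1, hp.2]) (by linarith [hp.1, hp.2])]
  exact h1.trans h2

lemma aux_param (g : ℝ → ℝ) (hg : ContDiff ℝ 1 g)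
    (a b v : ℝ → ℝ) (ha : Continuous a) (hb : Continuous b)
    (hv : IntervalIntegrable v volume 0 1) (y₀ : ℝ) :
    HasDerivAt (fun y => ∫ p in (0:ℝ)..1, g (a p + y * b p) * v p)
      (∫ p in (0:ℝ)..1, deriv g (a p + y₀ * b p) * b p * v p) y₀ := by
  have hgd : Differentiable ℝ g := hg.differentiable one_ne_zero
  have hgc : Continuous (deriv g) := hg.continuous_deriv le_rfl
  -- bounds
  obtain ⟨A, hA⟩ := (isCompact_Icc (a := (0:ℝ)) (b := 1)).exists_bound_of_continuousOn ha.continuousOn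
  obtain ⟨B, hB⟩ := (isCompact_Icc (a := (0:ℝ)) (b := 1)).exists_bound_of_continuousOn hb.continuousOn
  have hB0 : 0 ≤ B := le_trans (norm_nonneg _) (hB 0 (by norm_num))
  set R : ℝ := A + (|y₀| + 1) * B with hR
  obtain ⟨K, hK⟩ := (isCompact_Icc (a := -R) (b := R)).exists_bound_of_continuousOn hgc.continuousOn
  have hK0 : 0 ≤ K := by
    have hA0 : 0 ≤ A := le_trans (norm_nonneg _) (hA 0 (by norm_num))
    have hR0 : 0 ≤ R := by positivity
    exact le_trans (norm_nonneg _) (hK 0 (by constructor <;> linarith))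
  have hvm : AEStronglyMeasurable v (volume.restrict (Set.uIoc (0:ℝ) 1)) := by
    rw [uIoc_of_le (by norm_num : (0:ℝ) ≤ 1)]; exact hv.1.aestronglyMeasurable
  have key := intervalIntegral.hasDerivAt_integral_of_dominated_loc_of_deriv_le
    (F := fun y p => g (a p + y * b p) * v p)
    (F' := fun y p => deriv g (a p + y * b p) * b p * v p)
    (a := 0) (b := 1) (μ := volume) (x₀ := y₀)
    (bound := fun p => K * B * ‖v p‖) (Metric.ball_mem_nhds y₀ one_pos)
    ?_ ?_ ?_ ?_ ?_ ?_
  · exact key.2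
  · filter_upwards with y
    exact ((hgd.continuous.comp (by fun_prop)).aestronglyMeasurable.mul hvm)
  · exact hv.continuousOn_mul ((hgd.continuous.comp (by fun_prop)).continuousOn)
  · exact (((hgc.comp (by fun_prop)).mul hb).aestronglyMeasurable.mul hvm)
  · filter_upwards with p hp y hy
    rw [uIoc_of_le (by norm_num : (0:ℝ) ≤ 1)] at hp
    have hp' : p ∈ Icc (0:ℝ) 1 := ⟨le_of_lt hp.1, hp.2⟩
    have h1 : |a p| ≤ A := by have := hA p hp'; simpa [Real.norm_eq_abs] using this
    have h2 : |b p| ≤ B := by have := hB p hp'; simpa [Real.norm_eq_abs] using this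
    have hy' : |y| ≤ |y₀| + 1 := by
      have := mem_ball_iff_norm.mp hy
      have := abs_sub_abs_le_abs_sub y y₀
      simp only [Real.norm_eq_abs] at *
      linarith
    have hz : |a p + y * b p| ≤ R := by
      calc |a p + y * b p| ≤ |a p| + |y| * |b p| := by
            simpa [abs_mul] using abs_add_le (a p) (y * b p)
        _ ≤ A + (|y₀| + 1) * B := by
            have : |y| * |b p| ≤ (|y₀| + 1) * B := by
              apply mul_le_mul hy' h2 (abs_nonneg _) (by positivity)
            linarith
    have hKz : |deriv g (a p + y * b p)| ≤ K := by
      have := hK (a p + y * b p) (abs_le.mp hz)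
      simpa [Real.norm_eq_abs] using this
    calc ‖deriv g (a p + y * b p) * b p * v p‖
        = |deriv g (a p + y * b p)| * |b p| * ‖v p‖ := by
          simp [Real.norm_eq_abs, abs_mul]
      _ ≤ K * B * ‖v p‖ := by
          apply mul_le_mul_of_nonneg_right _ (norm_nonneg _)
          exact mul_le_mul hKz h2 (abs_nonneg _) hK0
  · exact (hv.norm.const_mul (K * B))
  · filter_upwards with p hp y hy
    have hinner : HasDerivAt (fun y => a p + y * b p) (b p) y := by
      simpa using ((hasDerivAt_id y).mul_const (b p)).const_add (a p)
    have houter : HasDerivAt g (deriv g (a p + y * b p)) (a p + y * b p) :=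
      (hgd (a p + y * b p)).hasDerivAt
    simpa [mul_assoc] using ((houter.comp y hinner).mul_const (v p))

lemma aux_DX (g : ℝ → ℝ) (hg : ContDiff ℝ 1 g) (v : ℝ → ℝ)
    (hv : IntervalIntegrable v volume 0 1) (t x : ℝ) :
    HasDerivAt (fun y => ∫ p in (0:ℝ)..1, g (y + t * (2 * p - 1)) * v p)
      (∫ p in (0:ℝ)..1, deriv g (x + t * (2 * p - 1)) * v p) x := by
  have h := aux_param g hg (fun p => t * (2 * p - 1)) (fun _ => 1) v (by fun_prop) (by fun_prop) hv x
  have e1 : (fun y => ∫ p in (0:ℝ)..1, g (t * (2 * p - 1) + y * 1) * v p)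
      = (fun y => ∫ p in (0:ℝ)..1, g (y + t * (2 * p - 1)) * v p) := by
    funext y
    apply intervalIntegral.integral_congr
    intro p _
    show g (t * (2 * p - 1) + y * 1) * v p = g (y + t * (2 * p - 1)) * v p
    have : t * (2 * p - 1) + y * 1 = y + t * (2 * p - 1) := by ring
    rw [this]
  have e2 : (∫ p in (0:ℝ)..1, deriv g (t * (2 * p - 1) + x * 1) * 1 * v p)
      = ∫ p in (0:ℝ)..1, deriv g (x + t * (2 * p - 1)) * v p := by
    apply intervalIntegral.integral_congr
    intro p _
    show deriv g (t * (2 * p - 1) + x * 1) * 1 * v p = deriv g (x + t * (2 * p - 1)) * v p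
    have : t * (2 * p - 1) + x * 1 = x + t * (2 * p - 1) := by ring
    rw [this, mul_one]
  rw [e1, e2] at h
  exact h

lemma aux_DT (g : ℝ → ℝ) (hg : ContDiff ℝ 1 g) (v : ℝ → ℝ)
    (hv : IntervalIntegrable v volume 0 1) (x t : ℝ) :
    HasDerivAt (fun τ => ∫ p in (0:ℝ)..1, g (x + τ * (2 * p - 1)) * v p)
      (∫ p in (0:ℝ)..1, deriv g (x + t * (2 * p - 1)) * ((2 * p - 1) * v p)) t := by
  have h := aux_param g hg (fun _ => x) (fun p => 2 * p - 1) v (by fun_prop) (by fun_prop) hv t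
  have e2 : (∫ p in (0:ℝ)..1, deriv g (x + t * (2 * p - 1)) * (2 * p - 1) * v p)
      = ∫ p in (0:ℝ)..1, deriv g (x + t * (2 * p - 1)) * ((2 * p - 1) * v p) := by
    apply intervalIntegral.integral_congr
    intro p _
    show deriv g (x + t * (2 * p - 1)) * (2 * p - 1) * v p
      = deriv g (x + t * (2 * p - 1)) * ((2 * p - 1) * v p)
    ring
  rw [e2] at h
  exact h

lemma aux_ibp (μ t x : ℝ) (hμ : 0 < μ) (ht : 0 < t) (f : ℝ → ℝ) (hf : ContDiff ℝ 2 f) :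
    (∫ p in (0:ℝ)..1, deriv (deriv f) (x + t * (2 * p - 1)) * (p * (1 - p)) ^ (μ/2 - 1))
    = (∫ p in (0:ℝ)..1, deriv (deriv f) (x + t * (2 * p - 1)) *
        ((2 * p - 1) * ((2 * p - 1) * (p * (1 - p)) ^ (μ/2 - 1))))
      + (μ/t) * ∫ p in (0:ℝ)..1, deriv f (x + t * (2 * p - 1)) *
          ((2 * p - 1) * (p * (1 - p)) ^ (μ/2 - 1)) := by
  have hs : -1 < μ/2 - 1 := by linarith
  have hμ2 : (0:ℝ) < μ/2 := by linarith
  have hf1 : ContDiff ℝ 1 (deriv f) := by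
    have := (contDiff_succ_iff_deriv (n := 1)).mp (by norm_num at hf ⊢; exact hf)
    exact this.2.2
  have hf'c : Continuous (deriv f) := hf1.continuous
  have hf'd : Differentiable ℝ (deriv f) := hf1.differentiable one_ne_zero
  have hf''c : Continuous (deriv (deriv f)) := hf1.continuous_deriv le_rfl
  have hWcont : ContinuousOn (fun p : ℝ => (p * (1 - p)) ^ (μ/2)) (uIcc (0:ℝ) 1) :=
    ContinuousOn.rpow_const (by fun_prop) (fun p _ => Or.inr (le_of_lt hμ2))
  set A : ℝ → ℝ := fun p => (2*t) * (deriv (deriv f) (x + t * (2 * p - 1)) * (p * (1 - p)) ^ (μ/2)) with hAdef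
  set B : ℝ → ℝ := fun p => (deriv f (x + t * (2 * p - 1)) * ((1 - 2*p) * (μ/2))) * (p * (1 - p)) ^ (μ/2 - 1) with hBdef
  have hA_int : IntervalIntegrable A volume 0 1 := by
    apply ContinuousOn.intervalIntegrable
    exact (continuousOn_const.mul (((hf''c.comp (by fun_prop)).continuousOn).mul hWcont))
  have hB_int : IntervalIntegrable B volume 0 1 :=
    (aux_w_int hs).continuousOn_mul (((hf'c.comp (by fun_prop)).continuousOn).mul (by fun_prop))
  set G : ℝ → ℝ := fun p => deriv f (x + t * (2 * p - 1)) * (p * (1 - p)) ^ (μ/2) with hGdef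
  have hGcont : ContinuousOn G (Icc 0 1) :=
    ((hf'c.comp (by fun_prop)).continuousOn).mul
      (ContinuousOn.rpow_const (by fun_prop) (fun p _ => Or.inr (le_of_lt hμ2)))
  have hG : ∀ p ∈ Ioo (0:ℝ) 1, HasDerivAt G (A p + B p) p := by
    intro p hp
    have hbase : HasDerivAt (fun p : ℝ => p * (1 - p)) (1 - 2*p) p := by
      have h := (hasDerivAt_id p).mul ((hasDerivAt_const p (1:ℝ)).sub (hasDerivAt_id p))
      simp only [id_eq] at h
      exact h.congr_deriv (by simp only [Pi.sub_apply, id_eq]; ring)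
    have hne : p * (1 - p) ≠ 0 := by nlinarith [hp.1, hp.2]
    have hW : HasDerivAt (fun p : ℝ => (p * (1 - p)) ^ (μ/2))
        ((1 - 2*p) * (μ/2) * (p * (1 - p)) ^ (μ/2 - 1)) p :=
      hbase.rpow_const (Or.inl hne)
    have hinner : HasDerivAt (fun p : ℝ => x + t * (2 * p - 1)) (t * 2) p := by
      have := ((((hasDerivAt_id p).const_mul (2:ℝ)).sub_const 1).const_mul t).const_add x
      exact this.congr_deriv (by ring)
    have hU : HasDerivAt (fun p : ℝ => deriv f (x + t * (2 * p - 1)))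
        (deriv (deriv f) (x + t * (2 * p - 1)) * (t * 2)) p :=
      (hf'd _).hasDerivAt.comp p hinner
    have := hU.mul hW
    refine this.congr_deriv ?_
    simp only [hAdef, hBdef]
    ring
  have hFTC : (∫ p in (0:ℝ)..1, (A p + B p)) = G 1 - G 0 :=
    integral_eq_sub_of_hasDerivAt_of_le zero_le_one hGcont hG (hA_int.add hB_int)
  have hG1 : G 1 = 0 := by
    simp only [hGdef]
    rw [show (1:ℝ) * (1 - 1) = 0 by ring, Real.zero_rpow (ne_of_gt hμ2), mul_zero]
  have hG0 : G 0 = 0 := by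
    simp only [hGdef]
    rw [show (0:ℝ) * (1 - 0) = 0 by ring, Real.zero_rpow (ne_of_gt hμ2), mul_zero]
  rw [intervalIntegral.integral_add hA_int hB_int, hG1, hG0, sub_zero] at hFTC
  -- compute ∫ A and ∫ B
  have hIA : (∫ p in (0:ℝ)..1, A p)
      = (2*t) * ∫ p in (0:ℝ)..1, deriv (deriv f) (x + t * (2 * p - 1)) * (p * (1 - p)) ^ (μ/2) := by
    simp only [hAdef]; exact intervalIntegral.integral_const_mul _ _
  have hIB : (∫ p in (0:ℝ)..1, B p)
      = (-(μ/2)) * ∫ p in (0:ℝ)..1, deriv f (x + t * (2 * p - 1)) *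
          ((2 * p - 1) * (p * (1 - p)) ^ (μ/2 - 1)) := by
    rw [← intervalIntegral.integral_const_mul]
    apply intervalIntegral.integral_congr
    intro p _
    show B p = -(μ/2) * (deriv f (x + t * (2 * p - 1)) * ((2 * p - 1) * (p * (1 - p)) ^ (μ/2 - 1)))
    simp only [hBdef]; ring
  rw [hIA, hIB] at hFTC
  -- key : 2t * I1 = (μ/2) * I2
  set I1 := ∫ p in (0:ℝ)..1, deriv (deriv f) (x + t * (2 * p - 1)) * (p * (1 - p)) ^ (μ/2) with hI1
  set I2 := ∫ p in (0:ℝ)..1, deriv f (x + t * (2 * p - 1)) * ((2 * p - 1) * (p * (1 - p)) ^ (μ/2 - 1)) with hI2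
  -- now handle the LHS minus first RHS integral
  have hint1 : IntervalIntegrable (fun p => deriv (deriv f) (x + t * (2 * p - 1)) *
      (p * (1 - p)) ^ (μ/2 - 1)) volume 0 1 :=
    (aux_w_int hs).continuousOn_mul ((hf''c.comp (by fun_prop)).continuousOn)
  have hint2 : IntervalIntegrable (fun p => deriv (deriv f) (x + t * (2 * p - 1)) *
      ((2 * p - 1) * ((2 * p - 1) * (p * (1 - p)) ^ (μ/2 - 1)))) volume 0 1 := by
    have h := (aux_w_int hs).continuousOn_mul
      (g := fun p => deriv (deriv f) (x + t * (2 * p - 1)) * ((2 * p - 1) * (2 * p - 1)))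
      (((hf''c.comp (by fun_prop)).continuousOn).mul (by fun_prop))
    apply h.congr_ae
    filter_upwards with p
    show _ = deriv (deriv f) (x + t * (2 * p - 1)) * ((2 * p - 1) * ((2 * p - 1) * (p * (1 - p)) ^ (μ/2 - 1)))
    ring
  have hdiff : (∫ p in (0:ℝ)..1, deriv (deriv f) (x + t * (2 * p - 1)) * (p * (1 - p)) ^ (μ/2 - 1))
      - (∫ p in (0:ℝ)..1, deriv (deriv f) (x + t * (2 * p - 1)) *
          ((2 * p - 1) * ((2 * p - 1) * (p * (1 - p)) ^ (μ/2 - 1))))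
      = 4 * I1 := by
    rw [← intervalIntegral.integral_sub hint1 hint2, hI1, ← intervalIntegral.integral_const_mul]
    apply intervalIntegral.integral_congr
    intro p hp
    rw [uIcc_of_le zero_le_one] at hp
    show deriv (deriv f) (x + t * (2 * p - 1)) * (p * (1 - p)) ^ (μ/2 - 1)
        - deriv (deriv f) (x + t * (2 * p - 1)) * ((2 * p - 1) * ((2 * p - 1) * (p * (1 - p)) ^ (μ/2 - 1)))
      = 4 * (deriv (deriv f) (x + t * (2 * p - 1)) * (p * (1 - p)) ^ (μ/2))
    have hkey : p * (1 - p) * (p * (1 - p)) ^ (μ/2 - 1) = (p * (1 - p)) ^ (μ/2) := by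
      rcases eq_or_ne (p * (1 - p)) 0 with h0 | h0
      · rw [h0, Real.zero_rpow (ne_of_gt hμ2), zero_mul]
      · have hpos : 0 < p * (1 - p) := lt_of_le_of_ne (by nlinarith [hp.1, hp.2]) (Ne.symm h0)
        rw [mul_comm, ← Real.rpow_add_one h0 (μ/2 - 1)]
        congr 1; ring
    rw [← hkey]; ring
  -- conclude
  have ht' : t ≠ 0 := ne_of_gt ht
  have : (4:ℝ) * I1 = (μ/t) * I2 := by
    have h2 : 2 * t * I1 = (μ/2) * I2 := by linarith
    field_simp
    nlinarith [h2]
  linarith [hdiff, this]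

lemma aux_moment (s : ℝ) :
    (∫ p in (0:ℝ)..1, (2 * p - 1) * (p * (1 - p)) ^ s) = 0 := by
  have h := intervalIntegral.integral_comp_sub_left (a := (0:ℝ)) (b := 1)
    (fun q => (2 * q - 1) * (q * (1 - q)) ^ s) 1
  norm_num at h
  have h2 : (∫ x in (0:ℝ)..1, (2 * (1 - x) - 1) * ((1 - x) * x) ^ s)
      = ∫ x in (0:ℝ)..1, -((2 * x - 1) * (x * (1 - x)) ^ s) := by
    apply intervalIntegral.integral_congr
    intro x _
    show (2 * (1 - x) - 1) * ((1 - x) * x) ^ s = -((2 * x - 1) * (x * (1 - x)) ^ s)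
    rw [show (1 - x) * x = x * (1 - x) from by ring]
    ring
  rw [h2, intervalIntegral.integral_neg] at h
  linarith

lemma aux_beta (μ : ℝ) (hμ : 0 < μ) :
    Real.Gamma μ / (Real.Gamma (μ/2)) ^ 2 * (∫ p in (0:ℝ)..1, (p * (1 - p)) ^ (μ/2 - 1)) = 1 := by
  have hμ2 : (0:ℝ) < μ/2 := by linarith
  set B : ℝ := ∫ p in (0:ℝ)..1, (p * (1 - p)) ^ (μ/2 - 1) with hB
  have hbeta : Complex.betaIntegral ((μ/2 : ℝ) : ℂ) ((μ/2 : ℝ) : ℂ) = (B : ℂ) := by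
    rw [Complex.betaIntegral, hB, ← intervalIntegral.integral_ofReal]
    apply intervalIntegral.integral_congr
    intro p hp
    rw [uIcc_of_le zero_le_one] at hp
    have h1p : (0:ℝ) ≤ 1 - p := by linarith [hp.2]
    show (p : ℂ) ^ (((μ/2 : ℝ) : ℂ) - 1) * (1 - (p:ℂ)) ^ (((μ/2 : ℝ) : ℂ) - 1)
        = (((p * (1 - p)) ^ (μ/2 - 1) : ℝ) : ℂ)
    rw [Real.mul_rpow hp.1 h1p, Complex.ofReal_mul,
      Complex.ofReal_cpow hp.1 (μ/2 - 1), Complex.ofReal_cpow h1p (μ/2 - 1)]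
    push_cast
    ring
  have h := Complex.Gamma_mul_Gamma_eq_betaIntegral
    (s := ((μ/2 : ℝ) : ℂ)) (t := ((μ/2 : ℝ) : ℂ)) (by simpa using hμ2) (by simpa using hμ2)
  rw [hbeta] at h
  have hsum : ((μ/2 : ℝ) : ℂ) + ((μ/2 : ℝ) : ℂ) = ((μ : ℝ) : ℂ) := by
    push_cast; ring
  rw [hsum, Complex.Gamma_ofReal, Complex.Gamma_ofReal, ← Complex.ofReal_mul, ← Complex.ofReal_mul] at h
  have hreal : Real.Gamma (μ/2) * Real.Gamma (μ/2) = Real.Gamma μ * B :=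
    Complex.ofReal_inj.mp h
  have hg1 : 0 < Real.Gamma μ := Real.Gamma_pos_of_pos hμ
  have hg2 : 0 < Real.Gamma (μ/2) := Real.Gamma_pos_of_pos hμ2
  rw [sq]
  field_simp
  linarith [hreal]

end auxEPD

/-- for any `μ > 0`, the function
`u(x,t) = (Γ(μ)/Γ(μ/2)²) ∫₀¹ f(x+t(2p-1)) (p(1-p))^{μ/2-1} dp`
solves the Cauchy problem `u_xx = u_tt + (μ/t) u_t`, `u(x,0) = f(x)`, `u_t(x,0) = 0`. -/
theorem epd_cauchy_solution (μ : ℝ) (hμ : 0 < μ) (f : ℝ → ℝ) (hf : ContDiff ℝ 2 f)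
    (u : ℝ → ℝ → ℝ)
    (hu : ∀ x t : ℝ, u x t =
      Real.Gamma μ / (Real.Gamma (μ / 2)) ^ 2 *
        ∫ p in (0 : ℝ)..1, f (x + t * (2 * p - 1)) * (p * (1 - p)) ^ (μ / 2 - 1)) :
    (∀ x t : ℝ, 0 < t →
      deriv (deriv (fun x' => u x' t)) x =
        deriv (deriv (u x)) t + (μ / t) * deriv (u x) t) ∧
    (∀ x : ℝ, Tendsto (u x) (nhdsWithin 0 (Set.Ioi (0 : ℝ))) (nhds (f x))) ∧
    (∀ x : ℝ, Tendsto (fun t => deriv (u x) t) (nhdsWithin 0 (Set.Ioi (0 : ℝ))) (nhds 0)) := by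
  have hs : -1 < μ / 2 - 1 := by linarith
  set C : ℝ := Real.Gamma μ / (Real.Gamma (μ / 2)) ^ 2 with hC
  set w : ℝ → ℝ := fun p => (p * (1 - p)) ^ (μ / 2 - 1) with hwdef
  have hw : IntervalIntegrable w volume 0 1 := aux_w_int hs
  have hw2 : IntervalIntegrable (fun p => (2 * p - 1) * w p) volume 0 1 :=
    hw.continuousOn_mul (by fun_prop)
  have hf1 : ContDiff ℝ 1 f := hf.of_le (by norm_num)
  have hf1' : ContDiff ℝ 1 (deriv f) := by
    have := (contDiff_succ_iff_deriv (n := 1)).mp (by norm_num at hf ⊢; exact hf)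
    exact this.2.2
  have hwm : AEStronglyMeasurable w (volume.restrict (Set.uIoc (0:ℝ) 1)) := by
    rw [uIoc_of_le (by norm_num : (0:ℝ) ≤ 1)]; exact hw.1.aestronglyMeasurable
  have hw2m : AEStronglyMeasurable (fun p => (2 * p - 1) * w p) (volume.restrict (Set.uIoc (0:ℝ) 1)) := by
    rw [uIoc_of_le (by norm_num : (0:ℝ) ≤ 1)]; exact hw2.1.aestronglyMeasurable
  -- first t-derivative, valid for every x and τ
  have hD1 : ∀ x : ℝ, deriv (u x) = fun τ : ℝ =>
      C * ∫ p in (0:ℝ)..1, deriv f (x + τ * (2 * p - 1)) * ((2 * p - 1) * w p) := by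
    intro x
    funext τ
    have hux : u x = fun τ : ℝ => C * ∫ p in (0:ℝ)..1, f (x + τ * (2 * p - 1)) * w p :=
      funext (hu x)
    rw [hux]
    exact ((aux_DT f hf1 w hw x τ).const_mul C).deriv
  refine ⟨?_, ?_, ?_⟩
  · -- the PDE
    intro x t ht
    -- second x derivative
    have hXfun : deriv (fun x' => u x' t) = fun y : ℝ =>
        C * ∫ p in (0:ℝ)..1, deriv f (y + t * (2 * p - 1)) * w p := by
      funext y
      have hxt : (fun x' => u x' t)
          = fun y : ℝ => C * ∫ p in (0:ℝ)..1, f (y + t * (2 * p - 1)) * w p :=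
        funext fun y => hu y t
      rw [hxt]
      exact ((aux_DX f hf1 w hw t y).const_mul C).deriv
    have hXX : deriv (deriv (fun x' => u x' t)) x
        = C * ∫ p in (0:ℝ)..1, deriv (deriv f) (x + t * (2 * p - 1)) * w p := by
      rw [hXfun]
      exact ((aux_DX (deriv f) hf1' w hw t x).const_mul C).deriv
    have hTT : deriv (deriv (u x)) t
        = C * ∫ p in (0:ℝ)..1, deriv (deriv f) (x + t * (2 * p - 1)) *
            ((2 * p - 1) * ((2 * p - 1) * w p)) := by
      rw [hD1 x]
      exact ((aux_DT (deriv f) hf1' (fun p => (2 * p - 1) * w p) hw2 x t).const_mul C).deriv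
    rw [hXX, hTT, hD1 x]
    have hibp := aux_ibp μ t x hμ ht f hf
    simp only [hwdef]
    rw [hibp]
    ring
  · -- initial value
    intro x
    obtain ⟨M, hM⟩ := (isCompact_Icc (a := x - 1) (b := x + 1)).exists_bound_of_continuousOn
      hf1.continuous.continuousOn
    have hux : u x = fun t : ℝ => C * ∫ p in (0:ℝ)..1, f (x + t * (2 * p - 1)) * w p :=
      funext (hu x)
    rw [hux]
    have hmain : Tendsto (fun t : ℝ => ∫ p in (0:ℝ)..1, f (x + t * (2 * p - 1)) * w p)
        (nhdsWithin 0 (Set.Ioi (0:ℝ))) (nhds (∫ p in (0:ℝ)..1, f x * w p)) := by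
      apply intervalIntegral.tendsto_integral_filter_of_dominated_convergence
        (bound := fun p => M * ‖w p‖)
      · filter_upwards with t
        exact ((hf1.continuous.comp (by fun_prop)).aestronglyMeasurable.mul hwm)
      · have hIoo : Ioo (0:ℝ) 1 ∈ nhdsWithin 0 (Set.Ioi (0:ℝ)) :=
          Ioo_mem_nhdsGT_of_mem (by norm_num)
        filter_upwards [hIoo] with t ht
        filter_upwards with p hp
        rw [uIoc_of_le (by norm_num : (0:ℝ) ≤ 1)] at hp
        have harg : x + t * (2 * p - 1) ∈ Icc (x - 1) (x + 1) := by
          have h1 : |2 * p - 1| ≤ 1 := by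
            rw [abs_le]; constructor <;> [linarith [hp.1]; linarith [hp.2]]
          have h2 : |t * (2 * p - 1)| ≤ t := by
            rw [abs_mul, abs_of_pos ht.1]
            nlinarith [ht.1]
          have := abs_le.mp h2
          constructor <;> [linarith [this.1, ht.2]; linarith [this.2, ht.2]]
        have hfb := hM _ harg
        rw [norm_mul]
        exact mul_le_mul_of_nonneg_right hfb (norm_nonneg _)
      · exact hw.norm.const_mul M
      · filter_upwards with p hp
        have hc : Continuous (fun t : ℝ => f (x + t * (2 * p - 1))) :=
          hf1.continuous.comp (by fun_prop)
        have := ((hc.tendsto 0).mono_left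
          (nhdsWithin_le_nhds (s := Set.Ioi (0:ℝ)))).mul_const (w p)
        simpa using this
    have hval : C * ∫ p in (0:ℝ)..1, f x * w p = f x := by
      rw [intervalIntegral.integral_const_mul]
      have := aux_beta μ hμ
      calc C * (f x * ∫ p in (0:ℝ)..1, w p)
          = f x * (C * ∫ p in (0:ℝ)..1, w p) := by ring
        _ = f x * 1 := by rw [hC, hwdef]; rw [this]
        _ = f x := mul_one _
    have := hmain.const_mul C
    rw [hval] at this
    exact this
  · -- initial derivative
    intro x
    rw [hD1 x]
    obtain ⟨M, hM⟩ := (isCompact_Icc (a := x - 1) (b := x + 1)).exists_bound_of_continuousOn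
      hf1'.continuous.continuousOn
    have hmain : Tendsto (fun t : ℝ => ∫ p in (0:ℝ)..1,
          deriv f (x + t * (2 * p - 1)) * ((2 * p - 1) * w p))
        (nhdsWithin 0 (Set.Ioi (0:ℝ)))
        (nhds (∫ p in (0:ℝ)..1, deriv f x * ((2 * p - 1) * w p))) := by
      apply intervalIntegral.tendsto_integral_filter_of_dominated_convergence
        (bound := fun p => M * ‖(2 * p - 1) * w p‖)
      · filter_upwards with t
        exact ((hf1'.continuous.comp (by fun_prop)).aestronglyMeasurable.mul hw2m)
      · have hIoo : Ioo (0:ℝ) 1 ∈ nhdsWithin 0 (Set.Ioi (0:ℝ)) :=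
          Ioo_mem_nhdsGT_of_mem (by norm_num)
        filter_upwards [hIoo] with t ht
        filter_upwards with p hp
        rw [uIoc_of_le (by norm_num : (0:ℝ) ≤ 1)] at hp
        have harg : x + t * (2 * p - 1) ∈ Icc (x - 1) (x + 1) := by
          have h2 : |t * (2 * p - 1)| ≤ t := by
            rw [abs_mul, abs_of_pos ht.1]
            have h1 : |2 * p - 1| ≤ 1 := by
              rw [abs_le]; constructor <;> [linarith [hp.1]; linarith [hp.2]]
            nlinarith [ht.1]
          have := abs_le.mp h2
          constructor <;> [linarith [this.1, ht.2]; linarith [this.2, ht.2]]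
        have hfb := hM _ harg
        rw [norm_mul]
        exact mul_le_mul_of_nonneg_right hfb (norm_nonneg _)
      · exact hw2.norm.const_mul M
      · filter_upwards with p hp
        have hc : Continuous (fun t : ℝ => deriv f (x + t * (2 * p - 1))) :=
          hf1'.continuous.comp (by fun_prop)
        have := ((hc.tendsto 0).mono_left
          (nhdsWithin_le_nhds (s := Set.Ioi (0:ℝ)))).mul_const ((2 * p - 1) * w p)
        simpa using this
    have hzero : (∫ p in (0:ℝ)..1, deriv f x * ((2 * p - 1) * w p)) = 0 := by
      rw [intervalIntegral.integral_const_mul, hwdef, aux_moment (μ / 2 - 1), mul_zero]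
    rw [hzero] at hmain
    have := hmain.const_mul C
    rw [mul_zero] at this
    exact this
end
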